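/- arXiv:1307.7460 — 3 statements merged into one kernel-verified Lean document; each statement's English description precedes it below -/
import Mathlib

section
/- If M is a simple binary matroid of rank r on ground set E, then any basis B of M is a fixing set; consequently fix(M) ≤ r. -/
/-- A matroid automorphism, modelled as a permutation of the ambient type that fixes
every point outside the ground set and preserves independence. -/
def IsMAuto {α : Type*} (M : Matroid α) (σ : Equiv.Perm α) : Prop :=
  (∀ x ∉ M.E, σ x = x) ∧ ∀ I : Set α, M.Indep (σ '' I) ↔ M.Indep I

/-- The automorphism group of a matroid, as a subgroup of `Equiv.Perm α`. -/
def matroidAutGroup {α : Type*} (M : Matroid α) : Subgroup (Equiv.Perm α) where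
  carrier := {σ | IsMAuto M σ}
  one_mem' := ⟨fun _ _ => rfl, fun I => by simp⟩
  mul_mem' := by
    rintro σ τ ⟨hσ1, hσ2⟩ ⟨hτ1, hτ2⟩
    refine ⟨fun x hx => ?_, fun I => ?_⟩
    · simp [Equiv.Perm.mul_apply, hτ1 x hx, hσ1 x hx]
    · rw [Equiv.Perm.coe_mul, Set.image_comp, hσ2, hτ2]
  inv_mem' := by
    rintro σ ⟨hσ1, hσ2⟩
    refine ⟨fun x hx => ?_, fun I => ?_⟩
    · have := hσ1 x hx
      simp only [Equiv.Perm.inv_def, Equiv.symm_apply_eq]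
      exact this.symm
    · have h := hσ2 ((σ⁻¹ : Equiv.Perm α) '' I)
      exact (by rwa [Set.image_image, show (fun x => σ (σ⁻¹ x)) = id by
        funext x; simp, Set.image_id] at h : M.Indep I ↔ M.Indep (⇑σ⁻¹ '' I)).symm

/-- A fixing set of a matroid: a subset of the ground set whose pointwise
stabilizer in the automorphism group is trivial. -/
def IsFixingSet {α : Type*} (M : Matroid α) (A : Set α) : Prop :=
  A ⊆ M.E ∧ ∀ σ : Equiv.Perm α, IsMAuto M σ → (∀ a ∈ A, σ a = a) → σ = 1

/-- The fixing number of a matroid: the least size of a fixing set. -/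
noncomputable def fixNum {α : Type*} (M : Matroid α) : ℕ :=
  sInf {k | ∃ A : Set α, IsFixingSet M A ∧ A.Finite ∧ A.ncard = k}

/-- A circuit of a matroid: a minimal dependent subset of the ground set. -/
def MCirc {α : Type*} (M : Matroid α) (C : Set α) : Prop :=
  C ⊆ M.E ∧ ¬ M.Indep C ∧ ∀ D ⊂ C, M.Indep D

section Helpers

variable {α : Type*} {M : Matroid α} {n : ℕ} {f : α → (Fin n → ZMod 2)}

lemma dep_iff_sum (hrep : ∀ I : Set α, I ⊆ M.E →
      (M.Indep I ↔ LinearIndependent (ZMod 2) (fun x : I => f x)))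
    {s : Finset α} (hsE : (↑s : Set α) ⊆ M.E) :
    ¬ M.Indep (↑s : Set α) ↔ ∃ t ⊆ s, t.Nonempty ∧ ∑ x ∈ t, f x = 0 := by
  classical
  haveI : Fintype (↑s : Set α) := s.finite_toSet.fintype
  have hone : ∀ a : ZMod 2, a ≠ 0 → a = 1 := by decide
  rw [hrep _ hsE]
  constructor
  · intro h
    obtain ⟨g, hg0, i0, hi0⟩ := Fintype.not_linearIndependent_iff.mp h
    refine ⟨(Finset.univ.filter fun i : (↑s : Set α) => g i ≠ 0).image Subtype.val,
      ?_, ⟨i0.val, Finset.mem_image_of_mem _ (by simp [hi0])⟩, ?_⟩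
    · intro x hx
      simp only [Finset.mem_image, Finset.mem_filter] at hx
      obtain ⟨i, _, rfl⟩ := hx
      exact i.2
    · rw [Finset.sum_image (fun x _ y _ h => Subtype.ext h)]
      calc ∑ i ∈ Finset.univ.filter fun i : (↑s : Set α) => g i ≠ 0, f i.val
          = ∑ i ∈ Finset.univ.filter fun i : (↑s : Set α) => g i ≠ 0, g i • f i.val := by
            refine Finset.sum_congr rfl fun i hi => ?_
            rw [hone _ (Finset.mem_filter.mp hi).2, one_smul]
        _ = ∑ i : (↑s : Set α), g i • f i.val := by
            refine Finset.sum_subset (Finset.filter_subset _ _) fun i _ hni => ?_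
            simp only [Finset.mem_filter, Finset.mem_univ, true_and, not_not] at hni
            rw [hni, zero_smul]
        _ = 0 := hg0
  · rintro ⟨t, hts, htne, htsum⟩ hLI
    have htE : (↑t : Set α) ⊆ M.E := (Finset.coe_subset.mpr hts).trans hsE
    have hIndep : M.Indep (↑t : Set α) :=
      ((hrep _ hsE).mpr hLI).subset (Finset.coe_subset.mpr hts)
    haveI : Fintype (↑t : Set α) := t.finite_toSet.fintype
    have hLIt := (hrep _ htE).mp hIndep
    obtain ⟨i0, hi0⟩ := htne
    have hsum : ∑ i : (↑t : Set α), (1 : ZMod 2) • f i.val = 0 := by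
      simp only [one_smul]
      rw [Finset.sum_set_coe (f := fun x => f x)]
      rwa [Finset.toFinset_coe]
    have := Fintype.linearIndependent_iff.mp hLIt (fun _ => 1) hsum ⟨i0, by simpa using hi0⟩
    simp at this

lemma exists_circuit (M : Matroid α) {S : Set α} (hfin : S.Finite) (hSE : S ⊆ M.E)
    (hdep : ¬ M.Indep S) : ∃ C, C ⊆ S ∧ MCirc M C := by
  have key : ∀ m (S : Set α), S.Finite → S.ncard = m → S ⊆ M.E → ¬ M.Indep S →
      ∃ C, C ⊆ S ∧ MCirc M C := by
    intro m
    induction m using Nat.strong_induction_on with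
    | _ m ih =>
      intro S hfin hcard hSE hdep
      by_cases h : ∀ D ⊂ S, M.Indep D
      · exact ⟨S, subset_rfl, hSE, hdep, h⟩
      · push_neg at h
        obtain ⟨D, hDS, hDdep⟩ := h
        obtain ⟨C, hCD, hC⟩ := ih D.ncard (by rw [← hcard]; exact Set.ncard_lt_ncard hDS hfin)
          D (hfin.subset hDS.subset) rfl (hDS.subset.trans hSE) hDdep
        exact ⟨C, hCD.trans hDS.subset, hC⟩
  exact key S.ncard S hfin rfl hSE hdep

lemma circuit_sum (hrep : ∀ I : Set α, I ⊆ M.E →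
      (M.Indep I ↔ LinearIndependent (ZMod 2) (fun x : I => f x)))
    {C : Set α} (hC : MCirc M C) {s : Finset α} (hs : (↑s : Set α) = C) :
    ∑ x ∈ s, f x = 0 := by
  have hsE : (↑s : Set α) ⊆ M.E := hs ▸ hC.1
  have hdep : ¬ M.Indep (↑s : Set α) := hs ▸ hC.2.1
  obtain ⟨t, hts, htne, htsum⟩ := (dep_iff_sum hrep hsE).mp hdep
  have htE : (↑t : Set α) ⊆ M.E := (Finset.coe_subset.mpr hts).trans hsE
  have htdep : ¬ M.Indep (↑t : Set α) :=
    (dep_iff_sum hrep htE).mpr ⟨t, subset_rfl, htne, htsum⟩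
  have hteq : (↑t : Set α) = C := by
    rcases (hs ▸ Finset.coe_subset.mpr hts : (↑t : Set α) ⊆ C).ssubset_or_eq with h | h
    · exact absurd (hC.2.2 _ h) htdep
    · exact h
  have : t = s := Finset.coe_injective (hteq.trans hs.symm)
  rwa [this] at htsum

lemma f_injOn (hsimple : ∀ C : Set α, MCirc M C → 3 ≤ C.encard)
    (hrep : ∀ I : Set α, I ⊆ M.E →
      (M.Indep I ↔ LinearIndependent (ZMod 2) (fun x : I => f x)))
    {x y : α} (hx : x ∈ M.E) (hy : y ∈ M.E) (hf : f x = f y) : x = y := by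
  classical
  by_contra hne
  have hsum : ∑ z ∈ ({x, y} : Finset α), f z = 0 := by
    rw [Finset.sum_pair hne, hf]
    funext i
    exact CharTwo.add_self_eq_zero _
  have hsE : (↑({x, y} : Finset α) : Set α) ⊆ M.E := by
    simp only [Finset.coe_insert, Finset.coe_singleton]
    exact Set.insert_subset hx (Set.singleton_subset_iff.mpr hy)
  have hdep : ¬ M.Indep (↑({x, y} : Finset α) : Set α) :=
    (dep_iff_sum hrep hsE).mpr ⟨{x, y}, subset_rfl, ⟨x, by simp⟩, hsum⟩
  obtain ⟨C, hCsub, hC⟩ := exists_circuit M (({x, y} : Finset α).finite_toSet) hsE hdep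
  have h3 := hsimple C hC
  have hle : C.encard ≤ 2 := by
    calc C.encard ≤ (↑({x, y} : Finset α) : Set α).encard := Set.encard_mono hCsub
      _ = 2 := by rw [Finset.coe_insert, Finset.coe_singleton, Set.encard_pair hne]
  exact absurd (h3.trans hle) (by norm_num)

end Helpers

/-- In a simple binary matroid of rank `r`, every basis is a fixing set, so the fixing
number is at most `r`. -/
theorem stmt9 {α : Type*} (M : Matroid α)
    (hsimple : ∀ C : Set α, MCirc M C → 3 ≤ C.encard)
    (hbinary : ∃ (n : ℕ) (f : α → (Fin n → ZMod 2)), ∀ I : Set α, I ⊆ M.E →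
      (M.Indep I ↔ LinearIndependent (ZMod 2) (fun x : I => f x)))
    (r : ℕ) (B : Set α) (hB : M.IsBase B) (hBr : B.ncard = r) (hBfin : B.Finite) :
    IsFixingSet M B ∧ fixNum M ≤ r := by
  classical
  obtain ⟨n, f, hrep⟩ := hbinary
  have hfix : IsFixingSet M B := by
    refine ⟨hB.subset_ground, fun σ hσ hfixB => ?_⟩
    obtain ⟨hσ1, hσ2⟩ := hσ
    have hσE : ∀ x ∈ M.E, σ x ∈ M.E := by
      intro x hx
      by_contra h
      have h1 : σ (σ x) = σ x := hσ1 _ h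
      exact h (by rw [σ.injective h1]; exact hx)
    refine Equiv.ext fun x => ?_
    show σ x = x
    by_cases hxE : x ∈ M.E
    · by_cases hxB : x ∈ B
      · exact hfixB x hxB
      · have hdep := hB.insert_dep ⟨hxE, hxB⟩
        have hins_fin : (insert x B).Finite := hBfin.insert x
        obtain ⟨C, hCsub, hC⟩ := exists_circuit M hins_fin hdep.subset_ground hdep.not_indep
        have heC : x ∈ C := by
          by_contra h
          exact hC.2.1 (hB.indep.subset fun y hy =>
            (hCsub hy).resolve_left fun e => h (e ▸ hy))
        have hCfin : C.Finite := hins_fin.subset hCsub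
        have hCdiffB : C \ {x} ⊆ B := by
          intro y hy
          rcases hCsub hy.1 with h | h
          · exact absurd h hy.2
          · exact h
        set d : Finset α := (hCfin.diff (t := {x})).toFinset with hd
        have hdcoe : (↑d : Set α) = C \ {x} := Set.Finite.coe_toFinset _
        have hxd : x ∉ d := by
          rw [← Finset.mem_coe, hdcoe]
          simp
        have hsum1 : f x + ∑ z ∈ d, f z = 0 := by
          have hcoe : (↑(insert x d) : Set α) = C := by
            rw [Finset.coe_insert, hdcoe, Set.insert_diff_singleton,
              Set.insert_eq_of_mem heC]
          have := circuit_sum hrep hC hcoe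
          rwa [Finset.sum_insert hxd] at this
        have hfixdiff : ∀ y ∈ C \ {x}, σ y = y := fun y hy => hfixB y (hCdiffB hy)
        have hσxne : σ x ∉ C \ {x} := by
          intro h
          have h1 : σ (σ x) = σ x := hfixdiff _ h
          exact h.2 (Set.mem_singleton_iff.mpr (σ.injective h1))
        have hσxE : σ x ∈ M.E := hσE x hxE
        have himg : σ '' C = insert (σ x) (C \ {x}) := by
          conv_lhs => rw [← Set.insert_eq_of_mem heC, ← Set.insert_diff_singleton]
          rw [Set.image_insert_eq]
          congr 1
          exact (Set.image_congr hfixdiff).trans (Set.image_id' _)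
        have hC' : MCirc M (σ '' C) := by
          refine ⟨?_, fun h => hC.2.1 ((hσ2 C).mp h), fun D hD => ?_⟩
          · rw [himg]
            exact Set.insert_subset hσxE (hCdiffB.trans hB.subset_ground)
          · have himgD : σ '' ((σ⁻¹ : Equiv.Perm α) '' D) = D := by
              rw [Set.image_image]
              simp
            have hsub : (σ⁻¹ : Equiv.Perm α) '' D ⊆ C := by
              intro y hy
              obtain ⟨z, hz, rfl⟩ := hy
              obtain ⟨w, hw, rfl⟩ := hD.subset hz
              simpa using hw
            have hne : (σ⁻¹ : Equiv.Perm α) '' D ≠ C := by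
              intro hcon
              exact hD.ne (by rw [← himgD, hcon])
            have := (hσ2 _).mpr (hC.2.2 _ ⟨hsub, fun h => hne (subset_antisymm hsub h)⟩)
            rwa [himgD] at this
        exact f_injOn hsimple hrep hσxE hxE (by
          have hσxd : σ x ∉ d := by
            rw [← Finset.mem_coe, hdcoe]
            exact hσxne
          have hcoe : (↑(insert (σ x) d) : Set α) = σ '' C := by
            rw [Finset.coe_insert, hdcoe, himg]
          have hsum2 : f (σ x) + ∑ z ∈ d, f z = 0 := by
            have := circuit_sum hrep hC' hcoe
            rwa [Finset.sum_insert hσxd] at this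
          exact add_right_cancel (hsum2.trans hsum1.symm))
    · exact hσ1 x hxE
  exact ⟨hfix, Nat.sInf_le ⟨B, hfix, hBfin, hBr⟩⟩
end

section
/- For n ≥ 4, the fixing number of the bicircular matroid of the wheel graph W_n equals 2; in particular, two adjacent rim edges form a fixing set. -/
/-- The vertex support of a set of edges. -/
def edgeSupp {V : Type*} (C : Set (Sym2 V)) : Set V := {v | ∃ e ∈ C, v ∈ e}

/-- A set of edges is connected if it is nonempty and any two supported vertices are
joined by a walk using only these edges. -/
def EdgeConn {V : Type*} (C : Set (Sym2 V)) : Prop :=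
  C.Nonempty ∧ ∀ u ∈ edgeSupp C, ∀ v ∈ edgeSupp C, (SimpleGraph.fromEdgeSet C).Reachable u v

/-- The edge set of a cycle of the graph `G`. -/
def IsCycleSet {V : Type*} (G : SimpleGraph V) (C : Set (Sym2 V)) : Prop :=
  ∃ (v : V) (w : G.Walk v v), w.IsCycle ∧ C = {e | e ∈ w.edges}

/-- A bicycle of `G`: a minimal connected edge set with more edges than vertices,
equivalently a subdivision of two loops at a vertex, two loops joined by an edge,
or three edges joining the same pair of vertices. -/
def IsBicycle {V : Type*} (G : SimpleGraph V) (C : Set (Sym2 V)) : Prop :=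
  C ⊆ G.edgeSet ∧ C.Finite ∧ EdgeConn C ∧ (edgeSupp C).ncard < C.ncard ∧
    ∀ D ⊂ C, ¬ (EdgeConn D ∧ D.Finite ∧ (edgeSupp D).ncard < D.ncard)

/-- The wheel graph `W n`: hub `none` joined to all rim vertices `some i`,
with rim vertices `some i`, `some (i+1)` adjacent. -/
def wheel (n : ℕ) : SimpleGraph (Option (ZMod n)) :=
  SimpleGraph.fromRel (fun a b => a = none ∨ ∃ i : ZMod n, a = some i ∧ b = some (i + 1))

namespace W13
open Set

variable {n : ℕ}

lemma zne (hn : 4 ≤ n) {k : ℕ} (h0 : 0 < k) (hk : k < 4) : (k : ZMod n) ≠ 0 := by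
  rw [Ne, ZMod.natCast_eq_zero_iff]
  intro h
  exact absurd (Nat.le_of_dvd h0 h) (by omega)

lemma z1 (hn : 4 ≤ n) : (1 : ZMod n) ≠ 0 := by
  have := zne hn (k := 1) one_pos (by norm_num); simpa using this

lemma z2 (hn : 4 ≤ n) : (2 : ZMod n) ≠ 0 := by
  have := zne hn (k := 2) two_pos (by norm_num); simpa using this

lemma z3 (hn : 4 ≤ n) : (3 : ZMod n) ≠ 0 := by
  have := zne hn (k := 3) (by norm_num) (by norm_num); simpa using this

def spk (n : ℕ) (i : ZMod n) : Sym2 (Option (ZMod n)) := s(none, some i)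

def rim (n : ℕ) (i : ZMod n) : Sym2 (Option (ZMod n)) := s(some i, some (i + 1))

def theta (n : ℕ) (i : ZMod n) : Set (Sym2 (Option (ZMod n))) :=
  {spk n i, spk n (i+1), spk n (i+2), rim n i, rim n (i+1)}

lemma spk_inj {i j : ZMod n} : spk n i = spk n j ↔ i = j := by
  simp [spk, Sym2.eq_iff]

lemma rim_inj (hn : 4 ≤ n) {i j : ZMod n} : rim n i = rim n j ↔ i = j := by
  constructor
  · intro h
    rw [rim, rim, Sym2.eq_iff] at h
    rcases h with ⟨h1, _⟩ | ⟨h1, h2⟩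
    · exact Option.some_injective _ h1
    · exfalso
      have e1 : i = j + 1 := Option.some_injective _ h1
      have e2 : i + 1 = j := Option.some_injective _ h2
      exact z2 hn (by first | linear_combination e2 - e1 | linear_combination -(e2 - e1))
  · rintro rfl; rfl

lemma spk_ne_rim {i j : ZMod n} : spk n i ≠ rim n j := by
  simp [spk, rim, Sym2.eq_iff]

lemma wheel_adj {a b : Option (ZMod n)} :
    (wheel n).Adj a b ↔ a ≠ b ∧
      (a = none ∨ b = none ∨ (∃ i, a = some i ∧ b = some (i+1)) ∨
        ∃ i, b = some i ∧ a = some (i+1)) := by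
  show (a ≠ b ∧ _) ↔ _
  constructor
  · rintro ⟨h1, (h | ⟨i, hi⟩) | (h | ⟨i, hi⟩)⟩
    · exact ⟨h1, Or.inl h⟩
    · exact ⟨h1, Or.inr (Or.inr (Or.inl ⟨i, hi⟩))⟩
    · exact ⟨h1, Or.inr (Or.inl h)⟩
    · exact ⟨h1, Or.inr (Or.inr (Or.inr ⟨i, hi⟩))⟩
  · rintro ⟨h1, h | h | ⟨i, hi⟩ | ⟨i, hi⟩⟩
    · exact ⟨h1, Or.inl (Or.inl h)⟩
    · exact ⟨h1, Or.inr (Or.inl h)⟩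
    · exact ⟨h1, Or.inl (Or.inr ⟨i, hi⟩)⟩
    · exact ⟨h1, Or.inr (Or.inr ⟨i, hi⟩)⟩

lemma mem_wheel_edgeSet (hn : 4 ≤ n) {e : Sym2 (Option (ZMod n))} :
    e ∈ (wheel n).edgeSet ↔ (∃ i, e = spk n i) ∨ (∃ i, e = rim n i) := by
  induction e using Sym2.ind with
  | _ x y =>
    rw [SimpleGraph.mem_edgeSet, wheel_adj]
    constructor
    · rintro ⟨hne, h⟩
      match x, y, h with
      | none, none, _ => exact absurd rfl hne
      | none, some j, _ => exact Or.inl ⟨j, rfl⟩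
      | some j, none, _ => exact Or.inl ⟨j, Sym2.eq_swap⟩
      | some j, some k, Or.inr (Or.inr (Or.inl ⟨i, hi1, hi2⟩)) =>
        exact Or.inr ⟨i, by rw [hi1, hi2, rim]⟩
      | some j, some k, Or.inr (Or.inr (Or.inr ⟨i, hi1, hi2⟩)) =>
        exact Or.inr ⟨i, by rw [hi2, hi1, rim]; exact Sym2.eq_swap⟩
    · rintro (⟨i, hi⟩ | ⟨i, hi⟩)
      · rw [spk] at hi
        rw [Sym2.eq_iff] at hi
        rcases hi with ⟨rfl, rfl⟩ | ⟨rfl, rfl⟩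
        · exact ⟨by simp, Or.inl rfl⟩
        · exact ⟨by simp, Or.inr (Or.inl rfl)⟩
      · rw [rim] at hi
        rw [Sym2.eq_iff] at hi
        rcases hi with ⟨rfl, rfl⟩ | ⟨rfl, rfl⟩
        · refine ⟨by simp [z1 hn], Or.inr (Or.inr (Or.inl ⟨i, rfl, rfl⟩))⟩
        · refine ⟨by simp [(z1 hn)], Or.inr (Or.inr (Or.inr ⟨i, rfl, rfl⟩))⟩

lemma mem_edgeSupp {V : Type*} {C : Set (Sym2 V)} {v : V} :
    v ∈ edgeSupp C ↔ ∃ e ∈ C, v ∈ e := Iff.rfl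

lemma edgeSupp_finite {V : Type*} {C : Set (Sym2 V)} (h : C.Finite) :
    (edgeSupp C).Finite := by
  have : edgeSupp C = ⋃ e ∈ C, {v | v ∈ e} := by
    ext v; simp [mem_edgeSupp]
  rw [this]
  refine Set.Finite.biUnion h (fun e _ => ?_)
  induction e using Sym2.ind with
  | _ x y =>
    have : {v | v ∈ s(x, y)} = {x, y} := by ext v; simp [Sym2.mem_iff]
    rw [this]; exact (Set.finite_singleton y).insert x

lemma edgeSupp_mono {V : Type*} {C D : Set (Sym2 V)} (h : C ⊆ D) :
    edgeSupp C ⊆ edgeSupp D := fun v ⟨e, he, hv⟩ => ⟨e, h he, hv⟩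

lemma ncard2 {α : Type*} {a b : α} (hab : a ≠ b) : ({a, b} : Set α).ncard = 2 :=
  Set.ncard_pair hab

lemma ncard3 {α : Type*} {a b c : α} (hab : a ≠ b) (hac : a ≠ c) (hbc : b ≠ c) :
    ({a, b, c} : Set α).ncard = 3 := by
  rw [Set.ncard_insert_of_notMem (by simp [hab, hac])
    ((Set.finite_singleton c).insert b), ncard2 hbc]

lemma ncard4 {α : Type*} {a b c d : α} (hab : a ≠ b) (hac : a ≠ c) (had : a ≠ d)
    (hbc : b ≠ c) (hbd : b ≠ d) (hcd : c ≠ d) :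
    ({a, b, c, d} : Set α).ncard = 4 := by
  rw [Set.ncard_insert_of_notMem (by simp [hab, hac, had])
    (((Set.finite_singleton d).insert c).insert b), ncard3 hbc hbd hcd]

lemma ncard5 {α : Type*} {a b c d e : α} (hab : a ≠ b) (hac : a ≠ c) (had : a ≠ d)
    (hae : a ≠ e) (hbc : b ≠ c) (hbd : b ≠ d) (hbe : b ≠ e) (hcd : c ≠ d)
    (hce : c ≠ e) (hde : d ≠ e) :
    ({a, b, c, d, e} : Set α).ncard = 5 := by
  rw [Set.ncard_insert_of_notMem (by simp [hab, hac, had, hae])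
    ((((Set.finite_singleton e).insert d).insert c).insert b),
    ncard4 hbc hbd hbe hcd hce hde]

/-- The basic counting bound: a finite set of non-loop edges has at most
`(#vertices).choose 2` elements. -/
lemma card_le_choose {V : Type*} {C : Set (Sym2 V)} (hfin : C.Finite)
    (hd : ∀ e ∈ C, ¬ e.IsDiag) : C.ncard ≤ (edgeSupp C).ncard.choose 2 := by
  classical
  have hsupp : (edgeSupp C).Finite := edgeSupp_finite hfin
  set s := hsupp.toFinset with hs
  have hsub : C ⊆ ↑(s.offDiag.image (Function.uncurry Sym2.mk)) := by
    intro e he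
    induction e using Sym2.ind with
    | _ x y =>
      have hx : x ∈ s := by rw [hs, Set.Finite.mem_toFinset]; exact ⟨_, he, by simp⟩
      have hy : y ∈ s := by rw [hs, Set.Finite.mem_toFinset]; exact ⟨_, he, by simp⟩
      have hxy : x ≠ y := by
        intro h; exact hd _ he (by rw [h]; exact Sym2.mk_isDiag_iff.2 rfl)
      simp only [Finset.coe_image, Set.mem_image, Finset.mem_coe, Finset.mem_offDiag]
      exact ⟨(x, y), ⟨hx, hy, hxy⟩, rfl⟩
  calc C.ncard ≤ (↑(s.offDiag.image (Function.uncurry Sym2.mk)) : Set _).ncard :=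
        Set.ncard_le_ncard hsub (Set.Finite.ofFinset _ (fun a => Iff.rfl))
    _ = (s.offDiag.image (Function.uncurry Sym2.mk)).card := Set.ncard_coe_finset _
    _ = s.card.choose 2 := Sym2.card_image_offDiag s
    _ = (edgeSupp C).ncard.choose 2 := by rw [Set.ncard_eq_toFinset_card _ hsupp]

lemma spk_mem_theta (hn : 4 ≤ n) {a i : ZMod n} :
    spk n a ∈ theta n i ↔ a = i ∨ a = i + 1 ∨ a = i + 2 := by
  simp only [theta, Set.mem_insert_iff, Set.mem_singleton_iff, spk_inj]
  constructor
  · rintro (h | h | h | h | h)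
    · exact Or.inl h
    · exact Or.inr (Or.inl h)
    · exact Or.inr (Or.inr h)
    · exact absurd h spk_ne_rim
    · exact absurd h spk_ne_rim
  · tauto

lemma rim_mem_theta (hn : 4 ≤ n) {a i : ZMod n} :
    rim n a ∈ theta n i ↔ a = i ∨ a = i + 1 := by
  simp only [theta, Set.mem_insert_iff, Set.mem_singleton_iff, rim_inj hn]
  constructor
  · rintro (h | h | h | h | h)
    · exact absurd h.symm spk_ne_rim
    · exact absurd h.symm spk_ne_rim
    · exact absurd h.symm spk_ne_rim
    · exact Or.inl h
    · exact Or.inr h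
  · tauto

lemma theta_finite {i : ZMod n} : (theta n i).Finite := by
  rw [theta]; exact Set.toFinite _

lemma theta_ncard (hn : 4 ≤ n) {i : ZMod n} : (theta n i).ncard = 5 := by
  have h1 := z1 hn
  have h2 := z2 hn
  refine ncard5 ?_ ?_ ?_ ?_ ?_ ?_ ?_ ?_ ?_ ?_ <;>
    simp only [Ne, spk_inj, rim_inj hn] <;>
    first
      | exact spk_ne_rim
      | (intro h; first
          | exact h1 (by first | linear_combination h | linear_combination -(h))
          | exact h1 (by first | linear_combination -h | linear_combination -(-h))
          | exact h2 (by first | linear_combination h | linear_combination -(h))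
          | exact h2 (by first | linear_combination -h | linear_combination -(-h)))

lemma theta_subset (hn : 4 ≤ n) {i : ZMod n} : theta n i ⊆ (wheel n).edgeSet := by
  intro e he
  rw [mem_wheel_edgeSet hn]
  rcases he with h | h | h | h | h
  · exact Or.inl ⟨_, h⟩
  · exact Or.inl ⟨_, h⟩
  · exact Or.inl ⟨_, h⟩
  · exact Or.inr ⟨_, h⟩
  · exact Or.inr ⟨_, h⟩

lemma edgeSupp_theta (hn : 4 ≤ n) {i : ZMod n} :
    edgeSupp (theta n i) = {none, some i, some (i+1), some (i+2)} := by
  ext v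
  simp only [mem_edgeSupp, theta, Set.mem_insert_iff, Set.mem_singleton_iff]
  constructor
  · rintro ⟨e, (rfl | rfl | rfl | rfl | rfl), hv⟩ <;>
      simp only [spk, rim, Sym2.mem_iff, add_assoc, one_add_one_eq_two] at hv <;> tauto
  · rintro (rfl | rfl | rfl | rfl)
    · exact ⟨spk n i, by tauto, by simp [spk]⟩
    · exact ⟨spk n i, by tauto, by simp [spk]⟩
    · exact ⟨spk n (i+1), by tauto, by simp [spk]⟩
    · exact ⟨spk n (i+2), by tauto, by simp [spk]⟩

lemma edgeSupp_theta_ncard (hn : 4 ≤ n) {i : ZMod n} :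
    (edgeSupp (theta n i)).ncard = 4 := by
  have h1 := z1 hn
  have h2 := z2 hn
  rw [edgeSupp_theta hn]
  refine ncard4 (by simp) (by simp) (by simp) ?_ ?_ ?_ <;>
    simp only [Ne, Option.some_inj] <;> intro h
  · exact h1 (by first | linear_combination -h | linear_combination -(-h))
  · exact h2 (by first | linear_combination -h | linear_combination -(-h))
  · exact h1 (by first | linear_combination -h | linear_combination -(-h))

lemma mem_theta_self {i : ZMod n} : spk n i ∈ theta n i := Set.mem_insert _ _

lemma mem_theta_one {i : ZMod n} : spk n (i+1) ∈ theta n i := by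
  rw [theta]; exact Set.mem_insert_iff.2 (Or.inr (Set.mem_insert _ _))

lemma mem_theta_two {i : ZMod n} : spk n (i+2) ∈ theta n i := by
  rw [theta]
  exact Set.mem_insert_iff.2 (Or.inr (Set.mem_insert_iff.2 (Or.inr (Set.mem_insert _ _))))

lemma mem_theta_rim {i : ZMod n} : rim n i ∈ theta n i := by
  rw [theta]; simp only [Set.mem_insert_iff]; tauto

lemma mem_theta_rim' {i : ZMod n} : rim n (i+1) ∈ theta n i := by
  rw [theta]; simp only [Set.mem_insert_iff, Set.mem_singleton_iff]; tauto

lemma theta_conn (hn : 4 ≤ n) {i : ZMod n} : EdgeConn (theta n i) := by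
  constructor
  · exact ⟨spk n i, mem_theta_self⟩
  · have key : ∀ v ∈ edgeSupp (theta n i), v = none ∨
        (SimpleGraph.fromEdgeSet (theta n i)).Adj none v := by
      intro v hv
      rw [edgeSupp_theta hn] at hv
      rcases hv with rfl | rfl | rfl | rfl
      · exact Or.inl rfl
      · exact Or.inr ((SimpleGraph.fromEdgeSet_adj _).2 ⟨mem_theta_self, by simp⟩)
      · exact Or.inr ((SimpleGraph.fromEdgeSet_adj _).2 ⟨mem_theta_one, by simp⟩)
      · exact Or.inr ((SimpleGraph.fromEdgeSet_adj _).2 ⟨mem_theta_two, by simp⟩)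
    intro u hu v hv
    have hu' : (SimpleGraph.fromEdgeSet (theta n i)).Reachable none u := by
      rcases key u hu with rfl | h
      · rfl
      · exact h.reachable
    have hv' : (SimpleGraph.fromEdgeSet (theta n i)).Reachable none v := by
      rcases key v hv with rfl | h
      · rfl
      · exact h.reachable
    exact hu'.symm.trans hv'

lemma not_bad_of_small {V' : Type*} {G : SimpleGraph V'} {D : Set (Sym2 V')}
    (hD : D ⊆ G.edgeSet) (hcard : D.ncard ≤ 4) :
    ¬ (EdgeConn D ∧ D.Finite ∧ (edgeSupp D).ncard < D.ncard) := by
  rintro ⟨-, hfin, hlt⟩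
  have hle : D.ncard ≤ (edgeSupp D).ncard.choose 2 :=
    card_le_choose hfin (fun e he => G.not_isDiag_of_mem_edgeSet (hD he))
  set m := (edgeSupp D).ncard with hm
  have h3 : m ≤ 3 := by omega
  have c3 : Nat.choose m 2 ≤ 3 := le_trans (Nat.choose_le_choose 2 h3) (by norm_num)
  have h2 : m ≤ 2 := by omega
  have c2 : Nat.choose m 2 ≤ 1 := le_trans (Nat.choose_le_choose 2 h2) (by norm_num)
  have h0 : m = 0 := by omega
  rw [h0] at hle
  simp only [Nat.choose] at hle
  omega

lemma theta_bicycle (hn : 4 ≤ n) {i : ZMod n} : IsBicycle (wheel n) (theta n i) := by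
  refine ⟨theta_subset hn, theta_finite, theta_conn hn, ?_, ?_⟩
  · rw [theta_ncard hn, edgeSupp_theta_ncard hn]; norm_num
  · intro D hD
    refine not_bad_of_small (fun e he => theta_subset hn (hD.1 he)) ?_
    have := Set.ncard_lt_ncard hD theta_finite
    rw [theta_ncard hn] at this
    omega

lemma spk_injective : Function.Injective (spk n) := fun _ _ h => spk_inj.1 h

lemma rim_injective (hn : 4 ≤ n) : Function.Injective (rim n) :=
  fun _ _ h => (rim_inj hn).1 h

lemma classification (hn : 4 ≤ n) {C : Set (Sym2 (Option (ZMod n)))}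
    (hsub : C ⊆ (wheel n).edgeSet) (hfin : C.Finite) (h5 : C.ncard = 5)
    (hlt : (edgeSupp C).ncard < C.ncard) : ∃ i, C = theta n i := by
  have h1 := z1 hn
  have h2 := z2 hn
  have h3 := z3 hn
  have hsuppfin : (edgeSupp C).Finite := edgeSupp_finite hfin
  have hm : (edgeSupp C).ncard ≤ 4 := by omega
  set S : Set (ZMod n) := spk n ⁻¹' C with hS
  set R : Set (ZMod n) := rim n ⁻¹' C with hR
  have hSfin : S.Finite := Set.Finite.preimage (Set.injOn_of_injective spk_injective) hfin
  have hRfin : R.Finite := Set.Finite.preimage (Set.injOn_of_injective (rim_injective hn)) hfin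
  have hCeq : C = spk n '' S ∪ rim n '' R := by
    apply Set.Subset.antisymm
    · intro e he
      rcases (mem_wheel_edgeSet hn).1 (hsub he) with ⟨a, rfl⟩ | ⟨a, rfl⟩
      · exact Or.inl ⟨a, he, rfl⟩
      · exact Or.inr ⟨a, he, rfl⟩
    · rintro e (⟨a, ha, rfl⟩ | ⟨a, ha, rfl⟩) <;> exact ha
  have hcards : S.ncard + R.ncard = 5 := by
    rw [← h5, hCeq, Set.ncard_union_eq ?_ (hSfin.image _) (hRfin.image _),
      Set.ncard_image_of_injective _ spk_injective,
      Set.ncard_image_of_injective _ (rim_injective hn)]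
    rw [Set.disjoint_left]
    rintro e ⟨a, _, rfl⟩ ⟨b, _, hb⟩
    exact spk_ne_rim hb.symm
  have hsomeS : ∀ a ∈ S, some a ∈ edgeSupp C := fun a ha => ⟨spk n a, ha, by simp [spk]⟩
  have hsomeR : ∀ x ∈ R, some x ∈ edgeSupp C := fun x hx => ⟨rim n x, hx, by simp [rim]⟩
  have hsomeR' : ∀ x ∈ R, some (x+1) ∈ edgeSupp C := fun x hx => ⟨rim n x, hx, by simp [rim]⟩
  -- S is nonempty
  have hSne : S.Nonempty := by
    rw [Set.nonempty_iff_ne_empty]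
    intro h
    rw [h] at hcards
    simp at hcards
    have : (fun x : ZMod n => (some x : Option (ZMod n))) '' R ⊆ edgeSupp C := by
      rintro v ⟨x, hx, rfl⟩; exact hsomeR x hx
    have := Set.ncard_le_ncard this hsuppfin
    rw [Set.ncard_image_of_injective _ (Option.some_injective _)] at this
    omega
  have hnone : none ∈ edgeSupp C := by
    obtain ⟨a, ha⟩ := hSne
    exact ⟨spk n a, ha, by simp [spk]⟩
  -- R has at least two elements
  have hR2 : 1 < R.ncard := by
    by_contra h
    push_neg at h
    have hS4 : 4 ≤ S.ncard := by omega
    have hsubsupp : insert none ((fun x : ZMod n => (some x : Option (ZMod n))) '' S)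
        ⊆ edgeSupp C := by
      rintro v (rfl | ⟨a, ha, rfl⟩)
      · exact hnone
      · exact hsomeS a ha
    have hc := Set.ncard_le_ncard hsubsupp hsuppfin
    rw [Set.ncard_insert_of_notMem (by simp) (hSfin.image _),
      Set.ncard_image_of_injective _ (Option.some_injective _)] at hc
    omega
  obtain ⟨x, y, hx, hy, hxy⟩ := (Set.one_lt_ncard_iff hRfin).1 hR2
  have key : ∃ z, rim n z ∈ C ∧ rim n (z+1) ∈ C := by
    by_cases e1 : y = x + 1
    · exact ⟨x, hx, by rw [← e1]; exact hy⟩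
    by_cases e2 : x = y + 1
    · exact ⟨y, hy, by rw [← e2]; exact hx⟩
    exfalso
    have hsub5 : ({none, some x, some (x+1), some y, some (y+1)} :
        Set (Option (ZMod n))) ⊆ edgeSupp C := by
      rintro v (rfl | rfl | rfl | rfl | rfl)
      · exact hnone
      · exact hsomeR x hx
      · exact hsomeR' x hx
      · exact hsomeR y hy
      · exact hsomeR' y hy
    have hc := Set.ncard_le_ncard hsub5 hsuppfin
    rw [ncard5 (by simp) (by simp) (by simp) (by simp) ?_ ?_ ?_ ?_ ?_ ?_] at hc
    · omega
    · simp only [Ne, Option.some_inj]; intro h; exact h1 (by first | linear_combination -h | linear_combination -(-h))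
    · simp only [Ne, Option.some_inj]; exact fun h => hxy h
    · simp only [Ne, Option.some_inj]; exact fun h => e2 h
    · simp only [Ne, Option.some_inj]; exact fun h => e1 h.symm
    · simp only [Ne, Option.some_inj]; intro h; exact hxy (by first | linear_combination h | linear_combination -(h))
    · simp only [Ne, Option.some_inj]; intro h; exact h1 (by first | linear_combination -h | linear_combination -(-h))
  obtain ⟨z, hz1, hz2⟩ := key
  have hsub4 : ({none, some z, some (z+1), some (z+2)} : Set (Option (ZMod n)))
      ⊆ edgeSupp C := by
    rintro v (rfl | rfl | rfl | rfl)
    · exact hnone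
    · exact hsomeR z hz1
    · exact hsomeR' z hz1
    · have := hsomeR' (z+1) hz2
      rwa [show z + 1 + 1 = z + 2 by ring] at this
  have hsupp_eq : ({none, some z, some (z+1), some (z+2)} : Set (Option (ZMod n)))
      = edgeSupp C := by
    refine Set.eq_of_subset_of_ncard_le hsub4 ?_ hsuppfin
    rw [ncard4 (by simp) (by simp) (by simp) ?_ ?_ ?_]
    · exact hm
    · simp only [Ne, Option.some_inj]; intro h; exact h1 (by first | linear_combination -h | linear_combination -(-h))
    · simp only [Ne, Option.some_inj]; intro h; exact h2 (by first | linear_combination -h | linear_combination -(-h))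
    · simp only [Ne, Option.some_inj]; intro h; exact h1 (by first | linear_combination -h | linear_combination -(-h))
  refine ⟨z, Set.eq_of_subset_of_ncard_le ?_ (by rw [theta_ncard hn, h5]) theta_finite⟩
  intro e he
  have hmemsupp : ∀ v, v ∈ e → v ∈ ({none, some z, some (z+1), some (z+2)} :
      Set (Option (ZMod n))) := by
    intro v hv; rw [hsupp_eq]; exact ⟨e, he, hv⟩
  rcases (mem_wheel_edgeSet hn).1 (hsub he) with ⟨a, rfl⟩ | ⟨a, rfl⟩
  · have hh := hmemsupp (some a) (by simp [spk])
    simp only [Set.mem_insert_iff, Set.mem_singleton_iff, Option.some_inj,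
      reduceCtorEq, false_or] at hh
    rcases hh with rfl | rfl | rfl
    · exact mem_theta_self
    · exact mem_theta_one
    · exact mem_theta_two
  · have ha := hmemsupp (some a) (by simp [rim])
    have ha' := hmemsupp (some (a+1)) (by simp [rim])
    simp only [Set.mem_insert_iff, Set.mem_singleton_iff, Option.some_inj,
      reduceCtorEq, false_or] at ha ha'
    rcases ha with rfl | rfl | h
    · exact mem_theta_rim
    · exact mem_theta_rim'
    · exfalso
      subst h
      rcases ha' with h' | h' | h'
      · exact h3 (by first | linear_combination h' | linear_combination -(h'))
      · exact h2 (by first | linear_combination h' | linear_combination -(h'))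
      · exact h1 (by first | linear_combination h' | linear_combination -(h'))

section Transport
variable {V' : Type*} (g : V' ≃ V')

lemma supp_map (D : Set (Sym2 V')) :
    edgeSupp (Sym2.map g '' D) = g '' edgeSupp D := by
  ext v
  simp only [mem_edgeSupp, Set.mem_image]
  constructor
  · rintro ⟨e, ⟨f, hf, rfl⟩, hv⟩
    obtain ⟨w, hw, rfl⟩ := Sym2.mem_map.1 hv
    exact ⟨w, ⟨f, hf, hw⟩, rfl⟩
  · rintro ⟨w, ⟨f, hf, hw⟩, rfl⟩
    exact ⟨Sym2.map g f, ⟨f, hf, rfl⟩, Sym2.mem_map.2 ⟨w, hw, rfl⟩⟩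

def fromEdgeSet_iso (D : Set (Sym2 V')) :
    SimpleGraph.fromEdgeSet D ≃g SimpleGraph.fromEdgeSet (Sym2.map g '' D) := by
  refine ⟨g, ?_⟩
  intro a b
  rw [SimpleGraph.fromEdgeSet_adj, SimpleGraph.fromEdgeSet_adj]
  constructor
  · rintro ⟨hmem, hne⟩
    have : Sym2.map g s(a, b) = s(g a, g b) := Sym2.map_pair_eq g a b
    rw [← this] at hmem
    obtain ⟨f, hf, hfe⟩ := hmem
    rw [(Sym2.map.injective g.injective).eq_iff] at hfe
    exact ⟨hfe ▸ hf, fun h => hne (congrArg g h)⟩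
  · rintro ⟨hmem, hne⟩
    exact ⟨⟨s(a, b), hmem, Sym2.map_pair_eq g a b⟩, fun h => hne (g.injective h)⟩

lemma conn_map {D : Set (Sym2 V')} (h : EdgeConn D) : EdgeConn (Sym2.map g '' D) := by
  obtain ⟨⟨e, he⟩, hreach⟩ := h
  refine ⟨⟨Sym2.map g e, e, he, rfl⟩, ?_⟩
  intro u hu v hv
  rw [supp_map] at hu hv
  obtain ⟨u', hu', rfl⟩ := hu
  obtain ⟨v', hv', rfl⟩ := hv
  have := (hreach u' hu' v' hv').map (fromEdgeSet_iso g D).toHom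
  exact this

lemma ncard_map (D : Set (Sym2 V')) : (Sym2.map g '' D).ncard = D.ncard :=
  Set.ncard_image_of_injective _ (Sym2.map.injective g.injective)

lemma supp_ncard_map (D : Set (Sym2 V')) :
    (edgeSupp (Sym2.map g '' D)).ncard = (edgeSupp D).ncard := by
  rw [supp_map, Set.ncard_image_of_injective _ g.injective]

lemma map_map_symm (D : Set (Sym2 V')) : Sym2.map g '' (Sym2.map g.symm '' D) = D := by
  rw [Set.image_image]
  have : ∀ e : Sym2 V', Sym2.map g (Sym2.map g.symm e) = e := by
    intro e
    have hg : (⇑g ∘ ⇑g.symm) = id := by ext x; simp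
    rw [Sym2.map_map, hg, Sym2.map_id, id]
  simp only [this, Set.image_id']

end Transport

lemma bicycle_image {V' : Type*} {G : SimpleGraph V'} (g : G ≃g G) {C : Set (Sym2 V')}
    (h : IsBicycle G C) : IsBicycle G (Sym2.map g.toEquiv '' C) := by
  obtain ⟨hsub, hfin, hconn, hlt, hmin⟩ := h
  refine ⟨?_, hfin.image _, conn_map _ hconn, ?_, ?_⟩
  · rintro e ⟨f, hf, rfl⟩
    induction f using Sym2.ind with
    | _ x y =>
      rw [Sym2.map_pair_eq, SimpleGraph.mem_edgeSet]
      exact g.map_adj_iff.2 (hsub hf)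
  · rw [ncard_map, supp_ncard_map]; exact hlt
  · intro D hD hbad
    have hDsub : Sym2.map g.toEquiv.symm '' D ⊂ C := by
      constructor
      · rintro e ⟨f, hf, rfl⟩
        obtain ⟨f', hf', rfl⟩ := hD.1 hf
        have : Sym2.map g.toEquiv.symm (Sym2.map g.toEquiv f') = f' := by
          have hg : (⇑g.toEquiv.symm ∘ ⇑g.toEquiv) = id := by funext x; exact g.toEquiv.symm_apply_apply x
          rw [Sym2.map_map, hg, Sym2.map_id, id]
        rw [this]; exact hf'
      · intro hcon
        have h2 : Sym2.map g.toEquiv '' C ⊆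
            Sym2.map g.toEquiv '' (Sym2.map g.toEquiv.symm '' D) := Set.image_mono hcon
        rw [map_map_symm] at h2
        exact hD.2 h2
    refine hmin _ hDsub ⟨conn_map _ hbad.1, hbad.2.1.image _, ?_⟩
    rw [ncard_map, supp_ncard_map]
    exact hbad.2.2

lemma exists_mcirc {α : Type*} [Finite α] (M : Matroid α) :
    ∀ (k : ℕ) (I : Set α), I.ncard ≤ k → I ⊆ M.E → ¬ M.Indep I →
      ∃ C, C ⊆ I ∧ MCirc M C := by
  intro k
  induction k with
  | zero =>
    intro I hk hIE hI
    have : I = ∅ := by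
      rw [← Set.ncard_eq_zero (Set.toFinite I)]; omega
    rw [this] at hI
    exact absurd M.empty_indep hI
  | succ k ih =>
    intro I hk hIE hI
    by_cases hall : ∀ D ⊂ I, M.Indep D
    · exact ⟨I, subset_rfl, hIE, hI, hall⟩
    · push_neg at hall
      obtain ⟨D, hDI, hD⟩ := hall
      have hlt : D.ncard < I.ncard := Set.ncard_lt_ncard hDI (Set.toFinite I)
      obtain ⟨C, hCD, hC⟩ := ih D (by omega) (hDI.1.trans hIE) hD
      exact ⟨C, hCD.trans hDI.1, hC⟩

lemma indep_iff_gen {α : Type*} [Finite α] (M : Matroid α) (I : Set α) :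
    M.Indep I ↔ I ⊆ M.E ∧ ∀ C, C ⊆ I → ¬ MCirc M C := by
  constructor
  · intro h
    refine ⟨h.subset_ground, fun C hCI hC => hC.2.1 (h.subset hCI)⟩
  · rintro ⟨hIE, hno⟩
    by_contra h
    obtain ⟨C, hCI, hC⟩ := exists_mcirc M I.ncard I le_rfl hIE h
    exact hno C hCI hC

lemma mauto_mem_ground {α : Type*} {M : Matroid α} {σ : Equiv.Perm α}
    (hσ : IsMAuto M σ) {x : α} (hx : x ∈ M.E) : σ x ∈ M.E := by
  by_contra h'
  have h1 : σ (σ x) = σ x := hσ.1 _ h'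
  have h2 : σ x = x := σ.injective h1
  rw [h2] at h'
  exact h' hx

lemma mcirc_image {α : Type*} {M : Matroid α} {σ : Equiv.Perm α}
    (hσ : IsMAuto M σ) {C : Set α} (h : MCirc M C) : MCirc M (σ '' C) := by
  obtain ⟨hsub, hdep, hmin⟩ := h
  refine ⟨?_, fun h => hdep ((hσ.2 C).1 h), ?_⟩
  · rintro e ⟨f, hf, rfl⟩
    exact mauto_mem_ground hσ (hsub hf)
  · intro D hD
    have h1 : (σ⁻¹ : Equiv.Perm α) '' D ⊆ C := by
      rintro x ⟨d, hd, rfl⟩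
      obtain ⟨c, hc, rfl⟩ := hD.1 hd
      simpa using hc
    have himg : σ '' ((σ⁻¹ : Equiv.Perm α) '' D) = D := by
      rw [Set.image_image]; simp
    have h2 : (σ⁻¹ : Equiv.Perm α) '' D ≠ C := by
      intro h
      refine hD.2 ?_
      rw [← himg, h]
    have := hmin _ (h1.ssubset_of_ne h2)
    have := (hσ.2 _).2 this
    rwa [himg] at this

lemma edge_map_mem (g : wheel n ≃g wheel n) {e : Sym2 (Option (ZMod n))}
    (he : e ∈ (wheel n).edgeSet) : Sym2.map ⇑g e ∈ (wheel n).edgeSet := by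
  induction e using Sym2.ind with
  | _ x y =>
    rw [Sym2.map_pair_eq, SimpleGraph.mem_edgeSet]
    exact g.map_adj_iff.2 he

noncomputable def esigma (n : ℕ) (g : wheel n ≃g wheel n) :
    Equiv.Perm (Sym2 (Option (ZMod n))) :=
  @Equiv.Perm.subtypeCongr _ (· ∈ (wheel n).edgeSet) (Classical.decPred _)
    g.mapEdgeSet (Equiv.refl _)

lemma esigma_edge (g : wheel n ≃g wheel n) {e : Sym2 (Option (ZMod n))}
    (he : e ∈ (wheel n).edgeSet) : esigma n g e = Sym2.map ⇑g e := by
  rw [esigma, @Equiv.Perm.subtypeCongr.left_apply _ _ (Classical.decPred _) _ _ _ he]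
  simp [SimpleGraph.Iso.mapEdgeSet, SimpleGraph.Hom.mapEdgeSet]

lemma esigma_nonedge (g : wheel n ≃g wheel n) {e : Sym2 (Option (ZMod n))}
    (he : e ∉ (wheel n).edgeSet) : esigma n g e = e := by
  rw [esigma, @Equiv.Perm.subtypeCongr.right_apply _ _ (Classical.decPred _) _ _ _ he]
  rfl

lemma esigma_symm_apply (g : wheel n ≃g wheel n) (e : Sym2 (Option (ZMod n))) :
    esigma n g.symm (esigma n g e) = e := by
  by_cases he : e ∈ (wheel n).edgeSet
  · rw [esigma_edge g he, esigma_edge g.symm (edge_map_mem g he)]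
    have : (⇑g.symm : Option (ZMod n) → Option (ZMod n)) ∘ ⇑g = id := by
      funext x; exact g.toEquiv.symm_apply_apply x
    rw [Sym2.map_map, this, Sym2.map_id, id]
  · rw [esigma_nonedge g he, esigma_nonedge g.symm he]

lemma esigma_image (g : wheel n ≃g wheel n) {I : Set (Sym2 (Option (ZMod n)))}
    (hI : I ⊆ (wheel n).edgeSet) : esigma n g '' I = Sym2.map ⇑g '' I := by
  apply Set.image_congr
  intro e he
  exact esigma_edge g (hI he)

lemma esigma_half (hn : 4 ≤ n) {M : Matroid (Sym2 (Option (ZMod n)))}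
    (hE : M.E = (wheel n).edgeSet)
    (hC : ∀ C, MCirc M C ↔ IsBicycle (wheel n) C)
    (g : wheel n ≃g wheel n) (I : Set (Sym2 (Option (ZMod n))))
    (hIE : I ⊆ M.E) (hno : ∀ C, C ⊆ I → ¬ MCirc M C) :
    esigma n g '' I ⊆ M.E ∧ ∀ C, C ⊆ esigma n g '' I → ¬ MCirc M C := by
  have hIE' : I ⊆ (wheel n).edgeSet := hE ▸ hIE
  constructor
  · rintro e ⟨f, hf, rfl⟩
    rw [esigma_edge g (hIE' hf), hE]
    exact edge_map_mem g (hIE' hf)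
  · intro C hCI hcirc
    have hbic : IsBicycle (wheel n) C := (hC C).1 hcirc
    have hCsub : C ⊆ Sym2.map ⇑g '' I := by rwa [esigma_image g hIE'] at hCI
    set D := Sym2.map ⇑g.symm '' C with hD
    have hDI : D ⊆ I := by
      rintro e ⟨f, hf, rfl⟩
      obtain ⟨f', hf', rfl⟩ := hCsub hf
      have : Sym2.map ⇑g.symm (Sym2.map ⇑g f') = f' := by
        have hg : (⇑g.symm : Option (ZMod n) → Option (ZMod n)) ∘ ⇑g = id := by
          funext x; exact g.toEquiv.symm_apply_apply x
        rw [Sym2.map_map, hg, Sym2.map_id, id]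
      rw [this]; exact hf'
    have hDbic : IsBicycle (wheel n) D := bicycle_image g.symm hbic
    exact hno D hDI ((hC D).2 hDbic)

lemma esigma_auto (hn : 4 ≤ n) {M : Matroid (Sym2 (Option (ZMod n)))}
    (hE : M.E = (wheel n).edgeSet)
    (hC : ∀ C, MCirc M C ↔ IsBicycle (wheel n) C)
    (g : wheel n ≃g wheel n) : IsMAuto M (esigma n g) := by
  haveI : NeZero n := ⟨by omega⟩
  constructor
  · intro x hx
    rw [hE] at hx
    exact esigma_nonedge g hx
  · intro I
    rw [indep_iff_gen, indep_iff_gen]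
    constructor
    · rintro ⟨hsub, hno⟩
      have := esigma_half hn hE hC g.symm _ hsub hno
      have himg : esigma n g.symm '' (esigma n g '' I) = I := by
        rw [Set.image_image]
        simp only [esigma_symm_apply]
        exact Set.image_id I
      rwa [himg] at this
    · rintro ⟨hsub, hno⟩
      exact esigma_half hn hE hC g I hsub hno

def rimFlip (n : ℕ) (c : ZMod n) : Equiv.Perm (ZMod n) :=
  Function.Involutive.toPerm (fun i => c - i) (fun i => by simp)

lemma wheel_adj_map (c : ZMod n) {a b : Option (ZMod n)} (h : (wheel n).Adj a b) :
    (wheel n).Adj ((rimFlip n c).optionCongr a) ((rimFlip n c).optionCongr b) := by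
  rw [wheel_adj] at h ⊢
  obtain ⟨hne, h⟩ := h
  refine ⟨fun hc => hne ((rimFlip n c).optionCongr.injective hc), ?_⟩
  rcases h with rfl | rfl | ⟨i, rfl, rfl⟩ | ⟨i, rfl, rfl⟩
  · exact Or.inl rfl
  · exact Or.inr (Or.inl rfl)
  · refine Or.inr (Or.inr (Or.inr ⟨c - (i + 1), ?_, ?_⟩))
    · simp [rimFlip, Function.Involutive.toPerm]
    · simp only [Equiv.optionCongr_apply, Option.map_some]
      congr 1
      simp only [rimFlip, Function.Involutive.toPerm, Equiv.coe_fn_mk]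
      ring
  · refine Or.inr (Or.inr (Or.inl ⟨c - (i + 1), ?_, ?_⟩))
    · simp [rimFlip, Function.Involutive.toPerm]
    · simp only [Equiv.optionCongr_apply, Option.map_some]
      congr 1
      simp only [rimFlip, Function.Involutive.toPerm, Equiv.coe_fn_mk]
      ring

def reflIso (n : ℕ) (c : ZMod n) : wheel n ≃g wheel n where
  toEquiv := (rimFlip n c).optionCongr
  map_rel_iff' := by
    intro a b
    constructor
    · intro h
      have h2 := wheel_adj_map c h
      have ha : ∀ x : Option (ZMod n),
          (rimFlip n c).optionCongr ((rimFlip n c).optionCongr x) = x := by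
        intro x
        cases x with
        | none => rfl
        | some i =>
          simp only [Equiv.optionCongr_apply, Option.map_some]
          congr 1
          simp [rimFlip, Function.Involutive.toPerm]
      rwa [ha, ha] at h2
    · exact wheel_adj_map c

lemma reflIso_apply_some (c j : ZMod n) :
    (reflIso n c) (some j) = some (c - j) := rfl

lemma reflIso_apply_none (c : ZMod n) :
    (reflIso n c) (none : Option (ZMod n)) = none := rfl

lemma reflIso_map_spk (c j : ZMod n) :
    Sym2.map ⇑(reflIso n c) (spk n j) = spk n (c - j) := by
  rw [spk, spk, Sym2.map_pair_eq, reflIso_apply_some]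
  rfl

lemma reflIso_map_rim (c j : ZMod n) (hc : c = 2 * j + 1) :
    Sym2.map ⇑(reflIso n c) (rim n j) = rim n j := by
  rw [rim, Sym2.map_pair_eq, reflIso_apply_some, reflIso_apply_some]
  have e1 : c - j = j + 1 := by rw [hc]; ring
  have e2 : c - (j + 1) = j := by rw [hc]; ring
  rw [e1, e2]
  exact Sym2.eq_swap

lemma spk_mem_edgeSet (hn : 4 ≤ n) (j : ZMod n) : spk n j ∈ (wheel n).edgeSet :=
  (mem_wheel_edgeSet hn).2 (Or.inl ⟨j, rfl⟩)

lemma rim_mem_edgeSet (hn : 4 ≤ n) (j : ZMod n) : rim n j ∈ (wheel n).edgeSet :=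
  (mem_wheel_edgeSet hn).2 (Or.inr ⟨j, rfl⟩)

lemma refl_nontrivial (hn : 4 ≤ n) (c : ZMod n) : esigma n (reflIso n c) ≠ 1 := by
  have h2 := z2 hn
  obtain ⟨j, hj⟩ : ∃ j : ZMod n, c - j ≠ j := by
    by_cases hc : c = 0
    · exact ⟨1, fun h => h2 (by first | linear_combination -h + hc | linear_combination -(-h + hc))⟩
    · exact ⟨0, by simpa using hc⟩
  intro h1
  have h3 : esigma n (reflIso n c) (spk n j) = spk n j := by rw [h1]; rfl
  rw [esigma_edge _ (spk_mem_edgeSet hn j), reflIso_map_spk] at h3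
  exact hj (spk_inj.1 h3)

lemma theta_inj (hn : 4 ≤ n) {i j : ZMod n} (h : theta n i = theta n j) : i = j := by
  have h1 := z1 hn
  have h2 := z2 hn
  have m1 : rim n i ∈ theta n j := h ▸ mem_theta_rim
  have m2 : rim n (i+1) ∈ theta n j := h ▸ mem_theta_rim'
  rw [rim_mem_theta hn] at m1 m2
  rcases m1 with h' | h'
  · exact h'
  · rcases m2 with h'' | h''
    · exact absurd (by linear_combination h'' - h' : (2 : ZMod n) = 0) h2
    · exact absurd (by linear_combination h'' - h' : (1 : ZMod n) = 0) h1

lemma rigid (hn : 4 ≤ n) (σ : Equiv.Perm (Sym2 (Option (ZMod n))))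
    (hfix : ∀ e ∉ (wheel n).edgeSet, σ e = e)
    (hB : ∀ C : Set (Sym2 (Option (ZMod n))), IsBicycle (wheel n) C →
      IsBicycle (wheel n) (σ '' C))
    (hr0 : σ (rim n 0) = rim n 0) (hr1 : σ (rim n 1) = rim n 1) : σ = 1 := by
  haveI : NeZero n := ⟨by omega⟩
  have h1 := z1 hn
  have h2 := z2 hn
  have h3 := z3 hn
  have hedge : ∀ e ∈ (wheel n).edgeSet, σ e ∈ (wheel n).edgeSet := by
    intro e he
    by_contra h'
    have ha : σ (σ e) = σ e := hfix _ h'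
    have hb : σ e = e := σ.injective ha
    rw [hb] at h'
    exact h' he
  have hθ : ∀ i, ∃ j, σ '' theta n i = theta n j := by
    intro i
    have hb := hB _ (theta_bicycle hn (i := i))
    have hcard : (σ '' theta n i).ncard = 5 := by
      rw [Set.ncard_image_of_injective _ σ.injective, theta_ncard hn]
    obtain ⟨j, hj⟩ := classification hn hb.1 hb.2.1 hcard (by rw [hcard]; exact hcard ▸ hb.2.2.2.1)
    exact ⟨j, hj⟩
  choose π hπ using hθ
  have hπinj : Function.Injective π := by
    intro i j h
    apply theta_inj hn
    have : σ '' theta n i = σ '' theta n j := by rw [hπ i, hπ j, h]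
    exact Set.image_injective.2 σ.injective this
  have hπsurj : Function.Surjective π := Finite.injective_iff_surjective.1 hπinj
  have hmem : ∀ e i, e ∈ theta n i ↔ σ e ∈ theta n (π i) := by
    intro e i
    rw [← hπ i]
    constructor
    · exact fun h => Set.mem_image_of_mem _ h
    · rintro ⟨f, hf, hfe⟩
      rwa [← σ.injective hfe]
  have hT : ∀ e, {i | σ e ∈ theta n i} = π '' {i | e ∈ theta n i} := by
    intro e
    ext k
    constructor
    · intro hk
      obtain ⟨j, rfl⟩ := hπsurj k
      exact ⟨j, (hmem e j).2 hk, rfl⟩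
    · rintro ⟨j, hj, rfl⟩
      exact (hmem e j).1 hj
  have hTrim : ∀ j : ZMod n, {i | rim n j ∈ theta n i} = {j, j - 1} := by
    intro j
    ext i
    rw [Set.mem_setOf_eq, rim_mem_theta hn, Set.mem_insert_iff, Set.mem_singleton_iff]
    constructor
    · rintro (h | h)
      · exact Or.inl h.symm
      · exact Or.inr (by first | linear_combination h | linear_combination -(h))
    · rintro (h | h)
      · exact Or.inl h.symm
      · exact Or.inr (by first | linear_combination h | linear_combination -(h))
  have hTspk : ∀ a : ZMod n, {i | spk n a ∈ theta n i} = {a, a - 1, a - 2} := by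
    intro a
    ext i
    rw [Set.mem_setOf_eq, spk_mem_theta hn, Set.mem_insert_iff, Set.mem_insert_iff,
      Set.mem_singleton_iff]
    constructor
    · rintro (h | h | h)
      · exact Or.inl h.symm
      · exact Or.inr (Or.inl (by first | linear_combination h | linear_combination -(h)))
      · exact Or.inr (Or.inr (by first | linear_combination h | linear_combination -(h)))
    · rintro (h | h | h)
      · exact Or.inl h.symm
      · exact Or.inr (Or.inl (by first | linear_combination h | linear_combination -(h)))
      · exact Or.inr (Or.inr (by first | linear_combination h | linear_combination -(h)))
  have hTrim_card : ∀ j : ZMod n, {i | rim n j ∈ theta n i}.ncard = 2 := by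
    intro j
    rw [hTrim j]
    exact ncard2 (fun h => h1 (by first | linear_combination -h | linear_combination -(-h)))
  have hTspk_card : ∀ a : ZMod n, {i | spk n a ∈ theta n i}.ncard = 3 := by
    intro a
    rw [hTspk a]
    refine ncard3 (fun h => h1 (by first | linear_combination -h | linear_combination -(-h))) (fun h => h2 (by first | linear_combination -h | linear_combination -(-h)))
      (fun h => h1 (by first | linear_combination -h | linear_combination -(-h)))
  have hrim_rim : ∀ j : ZMod n, ∃ k, σ (rim n j) = rim n k := by
    intro j
    have hedge' := hedge _ (rim_mem_edgeSet hn j)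
    rcases (mem_wheel_edgeSet hn).1 hedge' with ⟨a, ha⟩ | ⟨a, ha⟩
    · exfalso
      have hc := congrArg Set.ncard (hT (rim n j))
      rw [ha, hTspk_card, Set.ncard_image_of_injective _ hπinj, hTrim_card] at hc
      omega
    · exact ⟨a, ha⟩
  have hspk_spk : ∀ j : ZMod n, ∃ k, σ (spk n j) = spk n k := by
    intro j
    have hedge' := hedge _ (spk_mem_edgeSet hn j)
    rcases (mem_wheel_edgeSet hn).1 hedge' with ⟨a, ha⟩ | ⟨a, ha⟩
    · exact ⟨a, ha⟩
    · exfalso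
      have hc := congrArg Set.ncard (hT (spk n j))
      rw [ha, hTrim_card, Set.ncard_image_of_injective _ hπinj, hTspk_card] at hc
      omega
  have hpi_of : ∀ j : ZMod n, σ (rim n j) = rim n j → σ (rim n (j+1)) = rim n (j+1) →
      π j = j := by
    intro j hj hj1
    have m1 : rim n j ∈ theta n (π j) := by rw [← hj]; exact (hmem _ j).1 mem_theta_rim
    have m2 : rim n (j+1) ∈ theta n (π j) := by rw [← hj1]; exact (hmem _ j).1 mem_theta_rim'
    rw [rim_mem_theta hn] at m1 m2
    rcases m1 with h | h
    · exact h.symm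
    · rcases m2 with h' | h'
      · exact absurd (by linear_combination h' - h : (2 : ZMod n) = 0) h2
      · exact absurd (by linear_combination h' - h : (1 : ZMod n) = 0) h1
  have hstep : ∀ j : ZMod n, σ (rim n j) = rim n j → σ (rim n (j+1)) = rim n (j+1) →
      σ (rim n (j+2)) = rim n (j+2) := by
    intro j hj hj1
    have hpj : π j = j := hpi_of j hj hj1
    have hpj1 : π (j+1) = j + 1 := by
      have m2 : rim n (j+1) ∈ theta n (π (j+1)) := by
        rw [← hj1]; exact (hmem _ (j+1)).1 mem_theta_rim
      rw [rim_mem_theta hn] at m2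
      rcases m2 with h | h
      · exact h.symm
      · exfalso
        have : π (j+1) = j := by linear_combination -h
        have := hπinj (this.trans hpj.symm)
        exact h1 (by first | linear_combination this | linear_combination -(this))
    obtain ⟨k, hk⟩ := hrim_rim (j+2)
    have hmm : rim n (j+2) ∈ theta n (j+1) := (rim_mem_theta hn).2 (Or.inr (by ring))
    have : rim n k ∈ theta n (j+1) := by
      rw [← hk, ← hpj1]
      exact (hmem _ (j+1)).1 hmm
    rw [rim_mem_theta hn] at this
    rcases this with h | h
    · exfalso
      rw [h] at hk
      rw [← hj1] at hk
      have := σ.injective hk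
      have := (rim_inj hn).1 this
      exact h1 (by first | linear_combination this | linear_combination -(this))
    · rw [h] at hk
      rwa [show j + 1 + 1 = j + 2 by ring] at hk
  have hrimfix : ∀ j : ZMod n, σ (rim n j) = rim n j := by
    have key : ∀ k : ℕ, σ (rim n (k : ZMod n)) = rim n (k : ZMod n) ∧
        σ (rim n ((k : ZMod n)+1)) = rim n ((k : ZMod n)+1) := by
      intro k
      induction k with
      | zero =>
        constructor
        · rw [Nat.cast_zero]; exact hr0
        · rw [Nat.cast_zero, zero_add]; exact hr1
      | succ k ih =>
        have hs := hstep _ ih.1 ih.2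
        constructor
        · push_cast
          exact ih.2
        · push_cast
          rwa [show (k : ZMod n) + 1 + 1 = (k : ZMod n) + 2 by ring]
    intro j
    have := (key j.val).1
    rwa [ZMod.natCast_rightInverse j] at this
  have hπid : ∀ j : ZMod n, π j = j := fun j => hpi_of j (hrimfix j) (hrimfix (j+1))
  have hspkfix : ∀ a : ZMod n, σ (spk n a) = spk n a := by
    intro a
    obtain ⟨b, hb⟩ := hspk_spk a
    have mself : ∀ i : ZMod n, spk n a ∈ theta n i → spk n b ∈ theta n i := by
      intro i hi
      have := (hmem _ i).1 hi
      rwa [hπid, hb] at this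
    have A := mself a mem_theta_self
    have B := mself (a - 1) ((spk_mem_theta hn).2 (Or.inr (Or.inl (by ring))))
    have C := mself (a - 2) ((spk_mem_theta hn).2 (Or.inr (Or.inr (by ring))))
    rw [spk_mem_theta hn] at A B C
    have hba : b = a := by
      rcases A with h | h | h
      · exact h
      · exfalso
        rcases C with h' | h' | h'
        · exact h3 (by first | linear_combination h - h' | linear_combination -(h - h'))
        · exact h2 (by first | linear_combination h - h' | linear_combination -(h - h'))
        · exact h1 (by first | linear_combination h - h' | linear_combination -(h - h'))
      · exfalso
        rcases B with h' | h' | h'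
        · exact h3 (by first | linear_combination h - h' | linear_combination -(h - h'))
        · exact h2 (by first | linear_combination h - h' | linear_combination -(h - h'))
        · exact h1 (by first | linear_combination h - h' | linear_combination -(h - h'))
    rw [hb, hba]
  apply Equiv.ext
  intro e
  simp only [Equiv.Perm.coe_one, id]
  by_cases he : e ∈ (wheel n).edgeSet
  · rcases (mem_wheel_edgeSet hn).1 he with ⟨a, rfl⟩ | ⟨a, rfl⟩
    · exact hspkfix a
    · exact hrimfix a
  · exact hfix _ he

end W13

/-- For `n ≥ 4`, the fixing number of the bicircular matroid of the wheel `W n` is `2`;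
in particular the two adjacent rim edges `a₁ = {some 0, some 1}` and
`a₂ = {some 1, some 2}` form a fixing set. -/
theorem stmt13 (n : ℕ) (hn : 4 ≤ n)
    (M : Matroid (Sym2 (Option (ZMod n))))
    (hE : M.E = (wheel n).edgeSet)
    (hC : ∀ C : Set (Sym2 (Option (ZMod n))), MCirc M C ↔ IsBicycle (wheel n) C) :
    fixNum M = 2 ∧
      IsFixingSet M {s(some (0 : ZMod n), some (1 : ZMod n)),
        s(some (1 : ZMod n), some (2 : ZMod n))} := by
  classical
  haveI : NeZero n := ⟨by omega⟩
  have h1 := W13.z1 hn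
  have ha1 : s(some (0:ZMod n), some (1:ZMod n)) = W13.rim n 0 := by
    rw [W13.rim, zero_add]
  have ha2 : s(some (1:ZMod n), some (2:ZMod n)) = W13.rim n 1 := by
    rw [W13.rim, one_add_one_eq_two]
  have hBmap : ∀ σ : Equiv.Perm (Sym2 (Option (ZMod n))), IsMAuto M σ →
      ∀ C, IsBicycle (wheel n) C → IsBicycle (wheel n) (σ '' C) := by
    intro σ hσ C hbC
    exact (hC _).1 (W13.mcirc_image hσ ((hC C).2 hbC))
  have hfixset : IsFixingSet M ({W13.rim n 0, W13.rim n 1} :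
      Set (Sym2 (Option (ZMod n)))) := by
    constructor
    · rintro e (rfl | rfl) <;> rw [hE]
      · exact W13.rim_mem_edgeSet hn 0
      · exact W13.rim_mem_edgeSet hn 1
    · intro σ hσ hfixA
      refine W13.rigid hn σ ?_ (hBmap σ hσ) ?_ ?_
      · intro e he
        exact hσ.1 e (by rwa [hE])
      · exact hfixA _ (Set.mem_insert _ _)
      · exact hfixA _ (Set.mem_insert_iff.2 (Or.inr rfl))
  have hfixset' : IsFixingSet M {s(some (0 : ZMod n), some (1 : ZMod n)),
      s(some (1 : ZMod n), some (2 : ZMod n))} := by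
    rw [ha1, ha2]; exact hfixset
  refine ⟨?_, hfixset'⟩
  have hne : W13.rim n 0 ≠ W13.rim n 1 := by
    intro h
    exact h1 ((W13.rim_inj hn).1 h).symm
  have h2S : 2 ∈ {k | ∃ A : Set (Sym2 (Option (ZMod n))),
      IsFixingSet M A ∧ A.Finite ∧ A.ncard = 2} := by
    exact ⟨_, hfixset, (Set.finite_singleton _).insert _, W13.ncard2 hne⟩
  set S := {k | ∃ A : Set (Sym2 (Option (ZMod n))),
      IsFixingSet M A ∧ A.Finite ∧ A.ncard = k} with hS
  have h2S' : 2 ∈ S := ⟨_, hfixset, (Set.finite_singleton _).insert _, W13.ncard2 hne⟩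
  have hlb : ∀ k ∈ S, 2 ≤ k := by
    rintro k ⟨A, hA, hAfin, rfl⟩
    by_contra hlt
    push_neg at hlt
    interval_cases h : A.ncard
    · -- empty fixing set
      have hempty : A = ∅ := (Set.ncard_eq_zero hAfin).1 h
      have hauto := W13.esigma_auto hn hE hC (W13.reflIso n 1)
      have := hA.2 _ hauto (by rw [hempty]; rintro a ⟨⟩)
      exact W13.refl_nontrivial hn 1 this
    · obtain ⟨e, rfl⟩ := (Set.ncard_eq_one).1 h
      have heE : e ∈ (wheel n).edgeSet := by
        rw [← hE]; exact hA.1 rfl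
      rcases (W13.mem_wheel_edgeSet hn).1 heE with ⟨j, rfl⟩ | ⟨j, rfl⟩
      · have hauto := W13.esigma_auto hn hE hC (W13.reflIso n (2*j))
        have hfixe : ∀ a ∈ ({W13.spk n j} : Set (Sym2 (Option (ZMod n)))),
            W13.esigma n (W13.reflIso n (2*j)) a = a := by
          rintro a rfl
          rw [W13.esigma_edge _ (W13.spk_mem_edgeSet hn j), W13.reflIso_map_spk,
            show 2*j - j = j by ring]
        have := hA.2 _ hauto hfixe
        exact W13.refl_nontrivial hn (2*j) this
      · have hauto := W13.esigma_auto hn hE hC (W13.reflIso n (2*j+1))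
        have hfixe : ∀ a ∈ ({W13.rim n j} : Set (Sym2 (Option (ZMod n)))),
            W13.esigma n (W13.reflIso n (2*j+1)) a = a := by
          rintro a rfl
          rw [W13.esigma_edge _ (W13.rim_mem_edgeSet hn j),
            W13.reflIso_map_rim _ _ rfl]
        have := hA.2 _ hauto hfixe
        exact W13.refl_nontrivial hn (2*j+1) this
  have hmem : sInf S ∈ S := Nat.sInf_mem ⟨2, h2S'⟩
  have hge := hlb _ hmem
  have hle := Nat.sInf_le h2S'
  rw [fixNum, ← hS]
  omega
end

section
/- If G is a 3-connected simple graph, then the automorphism group of G is isomorphic to the automorphism group of its cycle matroid M(G). -/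
/-- The automorphism group of a simple graph, as a subgroup of `Equiv.Perm V`. -/
def graphAutGroup {V : Type*} (G : SimpleGraph V) : Subgroup (Equiv.Perm V) where
  carrier := {σ | ∀ u v, G.Adj (σ u) (σ v) ↔ G.Adj u v}
  one_mem' := by intro u v; simp
  mul_mem' := by
    intro σ τ hσ hτ u v
    simp only [Set.mem_setOf_eq, Equiv.Perm.mul_apply] at *
    exact (hσ (τ u) (τ v)).trans (hτ u v)
  inv_mem' := by
    intro σ hσ u v
    have h := (hσ (σ⁻¹ u) (σ⁻¹ v)).symm
    simpa using h

/-- Three-connectivity: more than three vertices, and deleting any fewer than three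
vertices leaves a connected graph. -/
def ThreeConnected {V : Type*} [Fintype V] (G : SimpleGraph V) : Prop :=
  4 ≤ Fintype.card V ∧
    ∀ S : Set V, S.ncard < 3 → ((⊤ : G.Subgraph).deleteVerts S).coe.Connected

namespace WhitneyAux
open SimpleGraph

variable {V : Type*} {G : SimpleGraph V} {A : Set (Sym2 V)}

lemma sym2_two {a b : V} {z : Sym2 V} (hab : a ≠ b) (ha : a ∈ z) (hb : b ∈ z) :
    z = s(a, b) := by
  induction z with
  | _ x y =>
    rw [Sym2.mem_iff] at ha hb
    rcases ha with rfl | rfl <;> rcases hb with rfl | rfl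
    · exact absurd rfl hab
    · rfl
    · exact Sym2.eq_swap
    · exact absurd rfl hab

lemma edge_rep {e : Sym2 V} (he : e ∈ G.edgeSet) : ∃ a b, e = s(a, b) ∧ G.Adj a b := by
  induction e with
  | _ x y => exact ⟨x, y, rfl, he⟩

lemma edge_rep_mem {e : Sym2 V} (he : e ∈ G.edgeSet) {v : V} (hv : v ∈ e) :
    ∃ u, e = s(v, u) ∧ G.Adj v u := by
  obtain ⟨a, b, rfl, hab⟩ := edge_rep he
  rcases Sym2.mem_iff.mp hv with rfl | rfl
  · exact ⟨b, rfl, hab⟩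
  · exact ⟨a, Sym2.eq_swap, hab.symm⟩

lemma mem_support_of_mem_edges' {u w x : V} {p : G.Walk u w} {ε : Sym2 V}
    (he : ε ∈ p.edges) (hx : x ∈ ε) : x ∈ p.support := by
  induction ε with
  | _ a b =>
    rcases Sym2.mem_iff.mp hx with rfl | rfl
    · exact Walk.fst_mem_support_of_mem_edges p he
    · exact Walk.snd_mem_support_of_mem_edges p he

/-- Reachability using only edges from `A`. -/
def AReach (G : SimpleGraph V) (A : Set (Sym2 V)) (a b : V) : Prop :=
  ∃ p : G.Walk a b, ∀ ε ∈ p.edges, ε ∈ A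

lemma AReach.refl (a : V) : AReach G A a a := ⟨Walk.nil, by simp⟩

lemma AReach.symm {a b : V} (h : AReach G A a b) : AReach G A b a := by
  obtain ⟨p, hp⟩ := h
  exact ⟨p.reverse, fun ε hε => hp ε (by rwa [Walk.edges_reverse, List.mem_reverse] at hε)⟩

lemma AReach.trans {a b c : V} (h : AReach G A a b) (h' : AReach G A b c) :
    AReach G A a c := by
  obtain ⟨p, hp⟩ := h; obtain ⟨q, hq⟩ := h'
  refine ⟨p.append q, fun ε hε => ?_⟩
  rw [Walk.edges_append, List.mem_append] at hε
  exact hε.elim (hp ε) (hq ε)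

lemma AReach.of_edge (hA : A ⊆ G.edgeSet) {ε : Sym2 V} (hε : ε ∈ A) {a b : V}
    (hab : ε = s(a, b)) : AReach G A a b := by
  have hadj : G.Adj a b := by rw [← G.mem_edgeSet, ← hab]; exact hA hε
  refine ⟨Walk.cons hadj Walk.nil, fun ε' hε' => ?_⟩
  simp only [Walk.edges_cons, Walk.edges_nil, List.mem_singleton] at hε'
  rwa [hε', ← hab]

lemma AReach.of_mem_mem (hA : A ⊆ G.edgeSet) {ε : Sym2 V} (hε : ε ∈ A) {p q : V}
    (hp : p ∈ ε) (hq : q ∈ ε) : AReach G A p q := by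
  by_cases hpq : p = q
  · rw [hpq]; exact AReach.refl q
  · exact AReach.of_edge hA hε (sym2_two hpq hp hq)

lemma exists_first_edge {a c : V} (p : G.Walk a c) (h : a ≠ c) :
    ∃ z, s(a, z) ∈ p.edges := by
  cases p with
  | nil => exact absurd rfl h
  | cons h' q => exact ⟨_, by rw [Walk.edges_cons]; exact List.mem_cons_self⟩

lemma isPath_concat {u v w : V} {p : G.Walk u v} (hp : p.IsPath) (h : G.Adj v w)
    (hw : w ∉ p.support) : (p.concat h).IsPath := by
  rw [← Walk.isPath_reverse_iff, Walk.reverse_concat]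
  exact hp.reverse.cons (by simpa using hw)

lemma cycleset_of_path_closed {a b : V} (Q : G.Walk a b) (hQ : Q.IsPath) (h : G.Adj b a)
    (hne : s(b, a) ∉ Q.edges) : IsCycleSet G {ε | ε ∈ (Walk.cons h Q).edges} :=
  ⟨b, Walk.cons h Q, (Walk.cons_isCycle_iff Q h).mpr ⟨hQ, hne⟩, rfl⟩

lemma cycle_through_two {c b d : V} (Q : G.Walk b d) (hQ : Q.IsPath) (hc : c ∉ Q.support)
    (h1 : G.Adj c b) (h2 : G.Adj d c) (hbd : b ≠ d) :
    ∃ C, IsCycleSet G C ∧ s(c, b) ∈ C ∧ s(d, c) ∈ C ∧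
      ∀ ε ∈ C, ε = s(c, b) ∨ ε = s(d, c) ∨ ε ∈ Q.edges := by
  have hRpath : (Q.concat h2).IsPath := isPath_concat hQ h2 hc
  have hne : s(c, b) ∉ (Q.concat h2).edges := by
    rw [Walk.edges_concat, List.concat_eq_append]
    intro hmem
    rcases List.mem_append.mp hmem with hmem | heq
    · exact hc (mem_support_of_mem_edges' hmem (Sym2.mem_mk_left c b))
    · rw [List.mem_singleton] at heq
      rcases Sym2.eq_iff.mp heq with ⟨hcd, -⟩ | ⟨-, hbd'⟩
      · exact h2.ne hcd.symm
      · exact hbd hbd'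
  refine ⟨{ε | ε ∈ (Walk.cons h1 (Q.concat h2)).edges},
    ⟨c, _, (Walk.cons_isCycle_iff _ h1).mpr ⟨hRpath, hne⟩, rfl⟩, by simp, ?_, ?_⟩
  · simp [Walk.edges_concat, List.concat_eq_append]
  · intro ε hε
    simp only [Set.mem_setOf_eq, Walk.edges_cons, Walk.edges_concat, List.concat_eq_append,
      List.mem_cons, List.mem_append, List.mem_singleton] at hε
    tauto



lemma walk_split_at_edge {x y : V} (w : G.Walk x y) {ε : Sym2 V} (hε : ε ∈ w.edges) :
    ∃ (u v : V) (p : G.Walk x u) (q : G.Walk v y),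
      s(u, v) = ε ∧ w.edges = p.edges ++ s(u, v) :: q.edges := by
  induction w with
  | nil => simp at hε
  | @cons a z y h' w' ih =>
    rw [Walk.edges_cons] at hε
    rcases List.mem_cons.mp hε with heq | hmem
    · exact ⟨a, z, Walk.nil, w', heq.symm, by simp⟩
    · obtain ⟨u, v, p, q, hev, hsplit⟩ := ih hmem
      exact ⟨u, v, Walk.cons h' p, q, hev, by
        rw [Walk.edges_cons, hsplit]; simp⟩

lemma cycle_minus_edge_walk {C : Set (Sym2 V)} (hC : IsCycleSet G C) {f : Sym2 V}
    (hf : f ∈ C) {a b : V} (hfab : f = s(a, b)) :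
    ∃ p : G.Walk a b, ∀ ε ∈ p.edges, ε ∈ C ∧ ε ≠ f := by
  obtain ⟨r, w, hw, rfl⟩ := hC
  obtain ⟨u, v, p, q, heq, hsplit⟩ := walk_split_at_edge w hf
  have hnodup : w.edges.Nodup := hw.edges_nodup
  rw [hsplit] at hnodup
  have hfp : f ∉ p.edges := fun hmem =>
    (List.disjoint_of_nodup_append hnodup) hmem (by rw [heq]; exact List.mem_cons_self)
  have hfq : f ∉ q.edges := by
    have := (List.nodup_append.mp hnodup).2.1
    rw [List.nodup_cons, heq] at this
    exact this.1
  have hpC : ∀ ε ∈ p.edges, ε ∈ {e | e ∈ w.edges} ∧ ε ≠ f := fun ε hε =>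
    ⟨by rw [Set.mem_setOf_eq, hsplit]; exact List.mem_append_left _ hε,
     fun h => hfp (h ▸ hε)⟩
  have hqC : ∀ ε ∈ q.edges, ε ∈ {e | e ∈ w.edges} ∧ ε ≠ f := fun ε hε =>
    ⟨by rw [Set.mem_setOf_eq, hsplit]; exact List.mem_append_right _ (List.mem_cons_of_mem _ hε),
     fun h => hfq (h ▸ hε)⟩
  rcases Sym2.eq_iff.mp (heq.trans hfab) with ⟨rfl, rfl⟩ | ⟨rfl, rfl⟩
  · refine ⟨p.reverse.append q.reverse, fun ε hε => ?_⟩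
    rw [Walk.edges_append, List.mem_append, Walk.edges_reverse, Walk.edges_reverse,
      List.mem_reverse, List.mem_reverse] at hε
    exact hε.elim (hpC ε) (hqC ε)
  · refine ⟨q.append p, fun ε hε => ?_⟩
    rw [Walk.edges_append, List.mem_append] at hε
    exact hε.elim (hqC ε) (hpC ε)

lemma cycleSet_subset_edgeSet {C : Set (Sym2 V)} (hC : IsCycleSet G C) : C ⊆ G.edgeSet := by
  obtain ⟨r, w, _, rfl⟩ := hC
  exact fun ε hε => w.edges_subset_edgeSet hε

lemma cycle_areach {C : Set (Sym2 V)} (hCA : C ⊆ A) (hC : IsCycleSet G C) {ε₁ ε₂ : Sym2 V}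
    (h1 : ε₁ ∈ C) (h2 : ε₂ ∈ C) {p q : V} (hp : p ∈ ε₁) (hq : q ∈ ε₂) :
    AReach G A p q := by
  classical
  obtain ⟨r, w, hw, rfl⟩ := hC
  have hps : p ∈ w.support := mem_support_of_mem_edges' h1 hp
  have hqs : q ∈ w.support := mem_support_of_mem_edges' h2 hq
  have hrp : AReach G A r p :=
    ⟨w.takeUntil p hps, fun ε hε => hCA (Walk.edges_takeUntil_subset _ _ hε)⟩
  have hrq : AReach G A r q :=
    ⟨w.takeUntil q hqs, fun ε hε => hCA (Walk.edges_takeUntil_subset _ _ hε)⟩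
  exact hrp.symm.trans hrq

/-- `f` lies in the closure of `X` (circuit version). -/
def spanned (G : SimpleGraph V) (f : Sym2 V) (X : Set (Sym2 V)) : Prop :=
  f ∈ X ∨ ∃ C, IsCycleSet G C ∧ f ∈ C ∧ C \ {f} ⊆ X

def rel (G : SimpleGraph V) (A : Set (Sym2 V)) (e f : Sym2 V) : Prop :=
  ∃ C, IsCycleSet G C ∧ C ⊆ A ∧ e ∈ C ∧ f ∈ C

/-- The characterization of complements of vertex stars. -/
def IsStarComp (G : SimpleGraph V) (A : Set (Sym2 V)) : Prop :=
  A ⊆ G.edgeSet ∧ (G.edgeSet \ A).Nonempty ∧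
  (∀ e ∈ G.edgeSet \ A, ¬ spanned G e A) ∧
  (∀ e ∈ G.edgeSet \ A, ∀ f ∈ G.edgeSet, spanned G f (insert e A)) ∧
  (∀ e ∈ A, ∀ f ∈ A, Relation.ReflTransGen (rel G A) e f)

lemma spanned_of_areach (hA : A ⊆ G.edgeSet) {a b : V} (h : G.Adj a b)
    (hr : AReach G A a b) (hf : s(a, b) ∉ A) : spanned G s(a, b) A := by
  classical
  obtain ⟨p0, hp0⟩ := hr
  have hp : p0.bypass.IsPath := p0.bypass_isPath
  have hpe : ∀ ε ∈ p0.bypass.edges, ε ∈ A := fun ε hε => hp0 ε (p0.edges_bypass_subset hε)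
  have hne : s(b, a) ∉ p0.bypass.edges := fun hmem => hf (Sym2.eq_swap ▸ hpe _ hmem)
  right
  refine ⟨{ε | ε ∈ (Walk.cons h.symm p0.bypass).edges},
    cycleset_of_path_closed _ hp h.symm hne, ?_, ?_⟩
  · rw [Set.mem_setOf_eq, Walk.edges_cons]
    exact Sym2.eq_swap ▸ List.mem_cons_self
  · rintro ε ⟨hε, hεf⟩
    rw [Set.mem_setOf_eq, Walk.edges_cons, List.mem_cons] at hε
    rcases hε with heq | hmem
    · exact absurd (heq.trans Sym2.eq_swap) hεf
    · exact hpe ε hmem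

lemma not_areach_of_flat (hA : A ⊆ G.edgeSet)
    (flat : ∀ e ∈ G.edgeSet \ A, ¬ spanned G e A) {a b : V} (h : G.Adj a b)
    (hf : s(a, b) ∉ A) : ¬ AReach G A a b := fun hr =>
  flat s(a, b) ⟨G.mem_edgeSet.mpr h, hf⟩ (spanned_of_areach hA h hr hf)





lemma del_walk (hdel : ∀ S : Set V, S.ncard < 3 → ((⊤ : G.Subgraph).deleteVerts S).coe.Connected)
    (S : Set V) (hS : S.ncard < 3) {a b : V} (ha : a ∉ S) (hb : b ∉ S) :
    ∃ p : G.Walk a b, ∀ z ∈ p.support, z ∉ S := by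
  have hc := hdel S hS
  have hav : a ∈ ((⊤ : G.Subgraph).deleteVerts S).verts := ⟨trivial, ha⟩
  have hbv : b ∈ ((⊤ : G.Subgraph).deleteVerts S).verts := ⟨trivial, hb⟩
  obtain ⟨p⟩ := hc.preconnected ⟨a, hav⟩ ⟨b, hbv⟩
  refine ⟨p.map (SimpleGraph.Subgraph.hom _), fun z hz => ?_⟩
  erw [Walk.support_map] at hz
  obtain ⟨⟨z', hz'⟩, _, rfl⟩ := List.mem_map.mp hz
  exact hz'.2

lemma first_adj {H : SimpleGraph V} {x y : V} (h : H.Reachable x y) (hne : x ≠ y) :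
    ∃ z, H.Adj x z := by
  obtain ⟨p⟩ := h
  cases p with
  | nil => exact absurd rfl hne
  | cons h' _ => exact ⟨_, h'⟩

lemma two_neighbors [Fintype V] (hcard : 4 ≤ Fintype.card V)
    (hdel : ∀ S : Set V, S.ncard < 3 → ((⊤ : G.Subgraph).deleteVerts S).coe.Connected)
    (v : V) : ∃ a b, G.Adj v a ∧ G.Adj v b ∧ a ≠ b := by
  classical
  by_contra hcon
  push_neg at hcon
  -- all neighbors of v are equal
  by_cases hex : ∃ a, G.Adj v a
  · obtain ⟨a, hva⟩ := hex
    obtain ⟨w, hw⟩ : ∃ w : V, w ∉ ({v, a} : Finset V) := by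
      have h2 : ({v, a} : Finset V).card ≤ 2 := Finset.card_insert_le _ _ |>.trans (by simp)
      have : 0 < ({v, a} : Finset V)ᶜ.card := by
        rw [Finset.card_compl]
        omega
      obtain ⟨w, hw⟩ := Finset.card_pos.mp this
      exact ⟨w, Finset.mem_compl.mp hw⟩
    rw [Finset.mem_insert, Finset.mem_singleton] at hw
    push_neg at hw
    have hc := hdel {a} (by rw [Set.ncard_singleton]; omega)
    have hvv : v ∈ ((⊤ : G.Subgraph).deleteVerts {a}).verts := ⟨trivial, by simp only [Set.mem_singleton_iff]; exact hva.ne⟩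
    have hwv : w ∈ ((⊤ : G.Subgraph).deleteVerts {a}).verts := ⟨trivial, by simp [hw.2]⟩
    obtain ⟨z, hz⟩ := first_adj (hc.preconnected ⟨v, hvv⟩ ⟨w, hwv⟩)
      (by simp [Subtype.ext_iff, hw.1.symm])
    have hadj : G.Adj v ↑z := by
      have := hz
      rw [Subgraph.coe_adj, Subgraph.deleteVerts_adj] at this
      exact this.2.2.2.2
    have hzna : (↑z : V) ≠ a := by
      have := z.2.2
      simpa using this
    exact hzna (hcon ↑z a hadj hva)
  · push_neg at hex
    obtain ⟨w, hw⟩ : ∃ w : V, w ≠ v := by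
      have : 1 < Fintype.card V := by omega
      obtain ⟨w, hw⟩ := Fintype.exists_ne_of_one_lt_card this v
      exact ⟨w, hw⟩
    have hc := hdel ∅ (by simp)
    have hvv : v ∈ ((⊤ : G.Subgraph).deleteVerts ∅).verts := ⟨trivial, by simp⟩
    have hwv : w ∈ ((⊤ : G.Subgraph).deleteVerts ∅).verts := ⟨trivial, by simp⟩
    obtain ⟨z, hz⟩ := first_adj (hc.preconnected ⟨v, hvv⟩ ⟨w, hwv⟩)
      (by simp [Subtype.ext_iff, hw.symm])
    have hadj : G.Adj v ↑z := by
      rw [Subgraph.coe_adj, Subgraph.deleteVerts_adj] at hz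
      exact hz.2.2.2.2
    exact hex ↑z hadj

lemma starinj (hnbr : ∀ w : V, ∃ a b, G.Adj w a ∧ G.Adj w b ∧ a ≠ b) {v w : V}
    (h : G.incidenceSet v = G.incidenceSet w) : v = w := by
  by_contra hvw
  obtain ⟨a, b, hva, hvb, hab⟩ := hnbr v
  have ha : s(v, a) ∈ G.incidenceSet w := h ▸ ⟨G.mem_edgeSet.mpr hva, Sym2.mem_mk_left v a⟩
  have hb : s(v, b) ∈ G.incidenceSet w := h ▸ ⟨G.mem_edgeSet.mpr hvb, Sym2.mem_mk_left v b⟩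
  rcases Sym2.mem_iff.mp ha.2 with h1 | h1
  · exact hvw h1.symm
  · rcases Sym2.mem_iff.mp hb.2 with h2 | h2
    · exact hvw h2.symm
    · exact hab (h1.symm.trans h2)



lemma adj_edges_rel (hdel : ∀ S : Set V, S.ncard < 3 → ((⊤ : G.Subgraph).deleteVerts S).coe.Connected)
    (v : V) {e f : Sym2 V} (he : e ∈ G.edgeSet \ G.incidenceSet v)
    (hf : f ∈ G.edgeSet \ G.incidenceSet v) (hef : e ≠ f) {c : V} (hce : c ∈ e)
    (hcf : c ∈ f) : rel G (G.edgeSet \ G.incidenceSet v) e f := by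
  classical
  obtain ⟨b, rfl, hcb⟩ := edge_rep_mem he.1 hce
  obtain ⟨d, rfl, hcd⟩ := edge_rep_mem hf.1 hcf
  have hbd : b ≠ d := fun h => hef (by rw [h])
  have hvc : v ≠ c := by rintro rfl; exact he.2 ⟨he.1, Sym2.mem_mk_left _ _⟩
  have hbS : b ∉ ({v, c} : Set V) := by
    rintro (rfl | rfl)
    · exact he.2 ⟨he.1, Sym2.mem_mk_right _ _⟩
    · exact hcb.ne rfl
  have hdS : d ∉ ({v, c} : Set V) := by
    rintro (rfl | rfl)
    · exact hf.2 ⟨hf.1, Sym2.mem_mk_right _ _⟩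
    · exact hcd.ne rfl
  obtain ⟨p0, hp0⟩ := del_walk hdel {v, c} (by rw [Set.ncard_pair hvc]; omega) hbS hdS
  have hQpath : p0.bypass.IsPath := p0.bypass_isPath
  have hQsup : ∀ z ∈ p0.bypass.support, z ∉ ({v, c} : Set V) := fun z hz =>
    hp0 z (p0.support_bypass_subset hz)
  have hQc : c ∉ p0.bypass.support := fun h => hQsup c h (Or.inr rfl)
  have hQA : ∀ ε ∈ p0.bypass.edges, ε ∈ G.edgeSet \ G.incidenceSet v := by
    intro ε hε
    refine ⟨p0.bypass.edges_subset_edgeSet hε, fun hinc => ?_⟩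
    exact hQsup v (mem_support_of_mem_edges' hε hinc.2) (Or.inl rfl)
  obtain ⟨C, hC, h1, h2, hsub⟩ := cycle_through_two p0.bypass hQpath hQc hcb hcd.symm hbd
  refine ⟨C, hC, ?_, h1, Sym2.eq_swap ▸ h2⟩
  intro ε hε
  rcases hsub ε hε with rfl | rfl | hmem
  · exact he
  · exact Sym2.eq_swap ▸ hf
  · exact hQA ε hmem

lemma chain_walk (hdel : ∀ S : Set V, S.ncard < 3 → ((⊤ : G.Subgraph).deleteVerts S).coe.Connected)
    (v : V) {a c : V} (p : G.Walk a c) (hs : ∀ z ∈ p.support, z ≠ v) :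
    ∀ e ∈ G.edgeSet \ G.incidenceSet v, a ∈ e →
    ∀ f ∈ G.edgeSet \ G.incidenceSet v, c ∈ f →
      Relation.ReflTransGen (rel G (G.edgeSet \ G.incidenceSet v)) e f := by
  induction p with
  | nil =>
    intro e he hae f hf hcf
    by_cases hef : e = f
    · rw [hef]
    · exact Relation.ReflTransGen.single (adj_edges_rel hdel v he hf hef hae hcf)
  | @cons a z c h' p' ih =>
    intro e he hae f hf hcf
    have haz : a ≠ v := hs a (Walk.start_mem_support _)
    have hzz : z ≠ v := by
      refine hs z ?_
      rw [Walk.support_cons]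
      exact List.mem_cons_of_mem _ (Walk.start_mem_support _)
    have hg : s(a, z) ∈ G.edgeSet \ G.incidenceSet v := by
      refine ⟨G.mem_edgeSet.mpr h', fun hinc => ?_⟩
      rcases Sym2.mem_iff.mp hinc.2 with h | h
      · exact haz h.symm
      · exact hzz h.symm
    have hs' : ∀ w ∈ p'.support, w ≠ v := fun w hw => hs w (by
      rw [Walk.support_cons]; exact List.mem_cons_of_mem _ hw)
    have hrec := ih hs' s(a, z) hg (Sym2.mem_mk_right a z) f hf hcf
    by_cases hee : e = s(a, z)
    · rwa [hee]
    · exact (Relation.ReflTransGen.single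
        (adj_edges_rel hdel v he hg hee hae (Sym2.mem_mk_left a z))).trans hrec

lemma starComp_isStarComp
    (hdel : ∀ S : Set V, S.ncard < 3 → ((⊤ : G.Subgraph).deleteVerts S).coe.Connected)
    (hnbr : ∀ w : V, ∃ a b, G.Adj w a ∧ G.Adj w b ∧ a ≠ b) (v : V) :
    IsStarComp G (G.edgeSet \ G.incidenceSet v) := by
  classical
  have hmeminc : ∀ e ∈ G.edgeSet \ (G.edgeSet \ G.incidenceSet v), e ∈ G.incidenceSet v := by
    intro e he
    by_contra h
    exact he.2 ⟨he.1, h⟩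
  refine ⟨Set.diff_subset, ?_, ?_, ?_, ?_⟩
  · obtain ⟨a, _, hva, _, _⟩ := hnbr v
    exact ⟨s(v, a), G.mem_edgeSet.mpr hva,
      fun h => h.2 ⟨G.mem_edgeSet.mpr hva, Sym2.mem_mk_left _ _⟩⟩
  · -- flat
    intro e he hsp
    have hei := hmeminc e he
    obtain ⟨u, rfl, hadj⟩ := edge_rep_mem he.1 hei.2
    rcases hsp with hmem | ⟨C, hC, hfC, hsub⟩
    · exact hmem.2 hei
    · obtain ⟨p, hp⟩ := cycle_minus_edge_walk hC hfC rfl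
      obtain ⟨z, hz⟩ := exists_first_edge p hadj.ne
      have hmem : s(v, z) ∈ G.edgeSet \ G.incidenceSet v := by
        refine hsub ⟨(hp _ hz).1, fun hsing => (hp _ hz).2 ?_⟩
        simpa using hsing
      exact hmem.2 ⟨hmem.1, Sym2.mem_mk_left _ _⟩
  · -- hyperplane
    intro e he f hfE
    by_cases hfin : f ∈ insert e (G.edgeSet \ G.incidenceSet v)
    · exact Or.inl hfin
    · have hfA : f ∉ G.edgeSet \ G.incidenceSet v := fun h => hfin (Set.mem_insert_of_mem _ h)
      have hfi : f ∈ G.incidenceSet v := hmeminc f ⟨hfE, hfA⟩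
      have hei := hmeminc e he
      obtain ⟨u, rfl, hadj⟩ := edge_rep_mem he.1 hei.2
      obtain ⟨w, rfl, hadjw⟩ := edge_rep_mem hfE hfi.2
      have hwu : w ≠ u := by
        rintro rfl
        exact hfin (Set.mem_insert _ _)
      obtain ⟨p0, hp0⟩ := del_walk hdel {v} (by rw [Set.ncard_singleton]; omega)
        (by simpa using hadj.ne') (by simpa using hadjw.ne')
      have hQpath : p0.bypass.IsPath := p0.bypass_isPath
      have hQv : v ∉ p0.bypass.support := fun h =>
        (hp0 v (p0.support_bypass_subset h)) rfl
      have hQA : ∀ ε ∈ p0.bypass.edges, ε ∈ G.edgeSet \ G.incidenceSet v := by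
        intro ε hε
        refine ⟨p0.bypass.edges_subset_edgeSet hε, fun hinc => ?_⟩
        exact (hp0 v (p0.support_bypass_subset (mem_support_of_mem_edges' hε hinc.2))) rfl
      obtain ⟨C, hC, h1, h2, hsub⟩ := cycle_through_two p0.bypass hQpath hQv hadj hadjw.symm
        (fun h => hwu h.symm)
      refine Or.inr ⟨C, hC, Sym2.eq_swap ▸ h2, ?_⟩
      rintro ε ⟨hε, hεf⟩
      rcases hsub ε hε with rfl | rfl | hmem
      · exact Set.mem_insert _ _
      · exact absurd Sym2.eq_swap hεf
      · exact Set.mem_insert_of_mem _ (hQA ε hmem)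
  · -- chain connectivity
    intro e he f hf
    obtain ⟨a, b, rfl, hab⟩ := edge_rep he.1
    obtain ⟨c, d, rfl, hcd⟩ := edge_rep hf.1
    have hav : a ≠ v := by
      rintro rfl
      exact he.2 ⟨he.1, Sym2.mem_mk_left _ _⟩
    have hcv : c ≠ v := by
      rintro rfl
      exact hf.2 ⟨hf.1, Sym2.mem_mk_left _ _⟩
    obtain ⟨p0, hp0⟩ := del_walk hdel {v} (by rw [Set.ncard_singleton]; omega)
      (by simpa using hav) (by simpa using hcv)
    exact chain_walk hdel v p0 (fun z hz => by simpa using hp0 z hz) _ he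
      (Sym2.mem_mk_left _ _) _ hf (Sym2.mem_mk_left _ _)

lemma w2 (hA : A ⊆ G.edgeSet) {x y : V} {u w : V} (p : G.Walk u w)
    (hp : ∀ ε ∈ p.edges, ε ∈ insert s(x, y) A) :
    AReach G A u w ∨ ((AReach G A x u ∨ AReach G A y u) ∧
      (AReach G A x w ∨ AReach G A y w)) := by
  induction p with
  | nil => exact Or.inl (AReach.refl _)
  | @cons u z w h' p' ih =>
    have hheadmem : s(u, z) ∈ insert s(x, y) A := hp _ (by
      rw [Walk.edges_cons]; exact List.mem_cons_self)
    have hp' : ∀ ε ∈ p'.edges, ε ∈ insert s(x, y) A := fun ε hε => hp ε (by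
      rw [Walk.edges_cons]; exact List.mem_cons_of_mem _ hε)
    rcases Set.mem_insert_iff.mp hheadmem with heq | hmemA
    · -- the edge is e₀
      have hQu : AReach G A x u ∨ AReach G A y u := by
        rcases Sym2.eq_iff.mp heq with ⟨rfl, rfl⟩ | ⟨rfl, rfl⟩
        · exact Or.inl (AReach.refl _)
        · exact Or.inr (AReach.refl _)
      have hQz : AReach G A x z ∨ AReach G A y z := by
        rcases Sym2.eq_iff.mp heq with ⟨rfl, rfl⟩ | ⟨rfl, rfl⟩
        · exact Or.inr (AReach.refl _)
        · exact Or.inl (AReach.refl _)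
      rcases ih hp' with hzw | ⟨_, hQw⟩
      · refine Or.inr ⟨hQu, ?_⟩
        rcases hQz with h | h
        · exact Or.inl (h.trans hzw)
        · exact Or.inr (h.trans hzw)
      · exact Or.inr ⟨hQu, hQw⟩
    · have hstep : AReach G A u z := AReach.of_edge hA hmemA rfl
      rcases ih hp' with hzw | ⟨hQz, hQw⟩
      · exact Or.inl (hstep.trans hzw)
      · refine Or.inr ⟨?_, hQw⟩
        rcases hQz with h | h
        · exact Or.inl (h.trans hstep.symm)
        · exact Or.inr (h.trans hstep.symm)

lemma lemmaX_C1 (hA : A ⊆ G.edgeSet)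
    (flat : ∀ e ∈ G.edgeSet \ A, ¬ spanned G e A)
    (hyp : ∀ e ∈ G.edgeSet \ A, ∀ f ∈ G.edgeSet, spanned G f (insert e A))
    {x y : V} (he₀ : s(x, y) ∈ G.edgeSet \ A) :
    ∀ f ∈ G.edgeSet \ A, ∃ a b, f = s(a, b) ∧ AReach G A x a ∧ AReach G A y b := by
  intro f hf
  obtain ⟨a, b, rfl, hab⟩ := edge_rep hf.1
  have hnot : ¬ AReach G A a b := not_areach_of_flat hA flat hab hf.2
  rcases hyp s(x, y) he₀ s(a, b) hf.1 with hmem | ⟨C, hC, hfC, hsub⟩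
  · rcases Set.mem_insert_iff.mp hmem with heq | hmemA
    · rcases Sym2.eq_iff.mp heq with ⟨rfl, rfl⟩ | ⟨rfl, rfl⟩
      · exact ⟨a, b, rfl, AReach.refl _, AReach.refl _⟩
      · exact ⟨b, a, Sym2.eq_swap, AReach.refl _, AReach.refl _⟩
    · exact absurd hmemA hf.2
  · obtain ⟨p, hp⟩ := cycle_minus_edge_walk hC hfC rfl
    have hpe : ∀ ε ∈ p.edges, ε ∈ insert s(x, y) A := fun ε hε =>
      hsub ⟨(hp ε hε).1, fun h => (hp ε hε).2 (by simpa using h)⟩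
    rcases w2 hA p hpe with hr | ⟨hQa, hQb⟩
    · exact absurd hr hnot
    · rcases hQa with hxa | hya
      · rcases hQb with hxb | hyb
        · exact absurd (hxa.symm.trans hxb) hnot
        · exact ⟨a, b, rfl, hxa, hyb⟩
      · rcases hQb with hxb | hyb
        · exact ⟨b, a, Sym2.eq_swap, hxb, hya⟩
        · exact absurd (hya.symm.trans hyb) hnot

lemma lemmaX_C2 (hA : A ⊆ G.edgeSet) {x y : V}
    (hC1 : ∀ f ∈ G.edgeSet \ A, ∃ a b, f = s(a, b) ∧ AReach G A x a ∧ AReach G A y b)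
    (hwalk : ∀ z : V, Nonempty (G.Walk z x)) :
    ∀ z, AReach G A x z ∨ AReach G A y z := by
  intro z
  obtain ⟨p⟩ := hwalk z
  clear hwalk
  induction p with
  | nil => exact Or.inl (AReach.refl _)
  | @cons z w x h' p' ih =>
    by_cases hmemA : s(z, w) ∈ A
    · have hstep : AReach G A z w := AReach.of_edge hA hmemA rfl
      rcases ih hC1 with h | h
      · exact Or.inl (h.trans hstep.symm)
      · exact Or.inr (h.trans hstep.symm)
    · obtain ⟨a, b, heq, hxa, hyb⟩ := hC1 s(z, w) ⟨G.mem_edgeSet.mpr h', hmemA⟩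
      rcases Sym2.eq_iff.mp heq with ⟨rfl, rfl⟩ | ⟨rfl, rfl⟩
      · exact Or.inl hxa
      · exact Or.inr hyb

lemma chain_touch (hAE : A ⊆ G.edgeSet) {x : V} {e f : Sym2 V}
    (hch : Relation.ReflTransGen (rel G A) e f) :
    ∀ c ∈ e, AReach G A x c → ∃ d ∈ f, AReach G A x d := by
  induction hch with
  | refl => exact fun c hc hR => ⟨c, hc, hR⟩
  | @tail b c hbc hstep ih =>
    intro c0 hc0 hR0
    obtain ⟨d3, hd3, hR3⟩ := ih c0 hc0 hR0
    obtain ⟨C, hC, hCA, hbC, hcC⟩ := hstep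
    obtain ⟨d1, d2, hrep, _⟩ := edge_rep (hAE (hCA hcC))
    refine ⟨d1, hrep ▸ Sym2.mem_mk_left _ _, hR3.trans ?_⟩
    exact cycle_areach hCA hC hbC hcC hd3 (hrep ▸ Sym2.mem_mk_left _ _)

lemma subc (hAE : A ⊆ G.edgeSet) {x y : V}
    (hC1 : ∀ f ∈ G.edgeSet \ A, ∃ a b, f = s(a, b) ∧ AReach G A x a ∧ AReach G A y b)
    (hnt : ¬ ∃ h ∈ A, ∃ c ∈ h, AReach G A y c) :
    A = G.edgeSet \ G.incidenceSet y := by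
  ext ε
  constructor
  · intro hε
    refine ⟨hAE hε, fun hinc => hnt ⟨ε, hε, y, hinc.2, AReach.refl _⟩⟩
  · rintro ⟨hεE, hεni⟩
    by_contra hεA
    obtain ⟨a, b, rfl, hxa, hyb⟩ := hC1 ε ⟨hεE, hεA⟩
    by_cases hby : b = y
    · exact hεni ⟨hεE, hby ▸ Sym2.mem_mk_right a b⟩
    · obtain ⟨p, hp⟩ := hyb
      obtain ⟨z, hz⟩ := exists_first_edge p (fun h => hby h.symm)
      exact hnt ⟨s(y, z), hp _ hz, y, Sym2.mem_mk_left _ _, AReach.refl _⟩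

lemma isStarComp_eq_starComp (hA : IsStarComp G A) : ∃ v, A = G.edgeSet \ G.incidenceSet v := by
  obtain ⟨hAE, ⟨e₀, he₀⟩, flat, hyp, chain⟩ := hA
  obtain ⟨x, y, rfl, hxy⟩ := edge_rep he₀.1
  have hC1 := lemmaX_C1 hAE flat hyp he₀
  have he₀' : s(y, x) ∈ G.edgeSet \ A := by rwa [Sym2.eq_swap]
  have hC1' := lemmaX_C1 hAE flat hyp he₀'
  have hnRxy : ¬ AReach G A x y := not_areach_of_flat hAE flat hxy he₀.2
  by_cases hP2 : ∃ h ∈ A, ∃ c ∈ h, AReach G A y c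
  · -- then no A-edge touches the x-side
    have hP1 : ¬ ∃ h ∈ A, ∃ c ∈ h, AReach G A x c := by
      rintro ⟨h1, hh1, c1, hc1, hR1⟩
      obtain ⟨h2, hh2, c2, hc2, hR2⟩ := hP2
      have hchain := chain h1 hh1 h2 hh2
      obtain ⟨c3, hc3, hR3⟩ := chain_touch hAE hchain c1 hc1 hR1
      have hcc : AReach G A c3 c2 := AReach.of_mem_mem hAE hh2 hc3 hc2
      exact hnRxy (hR3.trans (hcc.trans hR2.symm))
    exact ⟨x, subc hAE hC1' hP1⟩
  · exact ⟨y, subc hAE hC1 hP2⟩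

lemma perm_image_of_fix {α : Type*} (h : Equiv.Perm α) (S : Set α)
    (hfix : ∀ x ∉ S, h x = x) : ⇑h '' S = S := by
  apply Set.Subset.antisymm
  · rintro _ ⟨x, hx, rfl⟩
    by_contra hmem
    have hxx : h x = x := h.injective (hfix _ hmem)
    exact hmem (by rw [hxx]; exact hx)
  · intro y hy
    by_cases hmem : h.symm y ∈ S
    · exact ⟨h.symm y, hmem, h.apply_symm_apply y⟩
    · have h2 := hfix _ hmem
      rw [h.apply_symm_apply] at h2
      rw [← h2] at hmem
      exact absurd hy hmem

lemma perm_image_image_inv {α : Type*} (h : Equiv.Perm α) (S : Set α) :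
    ⇑h '' (⇑h⁻¹ '' S) = S := by
  rw [Equiv.Perm.inv_def, Equiv.image_symm_image]

lemma perm_inv_image_image {α : Type*} (h : Equiv.Perm α) (S : Set α) :
    ⇑h⁻¹ '' (⇑h '' S) = S := by
  rw [Equiv.Perm.inv_def, Equiv.symm_image_image]

lemma spanned_image {h : Equiv.Perm (Sym2 V)}
    (hcs : ∀ C, IsCycleSet G C → IsCycleSet G (⇑h '' C)) {f : Sym2 V} {X : Set (Sym2 V)}
    (hsp : spanned G f X) : spanned G (h f) (⇑h '' X) := by
  rcases hsp with hmem | ⟨C, hC, hfC, hsub⟩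
  · exact Or.inl ⟨f, hmem, rfl⟩
  · refine Or.inr ⟨⇑h '' C, hcs C hC, ⟨f, hfC, rfl⟩, ?_⟩
    rw [← Set.image_singleton, ← Set.image_diff h.injective]
    exact Set.image_mono hsub

lemma isStarComp_image {h : Equiv.Perm (Sym2 V)} (hEimg : ⇑h '' G.edgeSet = G.edgeSet)
    (hcs : ∀ C, IsCycleSet G C → IsCycleSet G (⇑h '' C))
    (hcs' : ∀ C, IsCycleSet G C → IsCycleSet G (⇑h⁻¹ '' C))
    (hA : IsStarComp G A) : IsStarComp G (⇑h '' A) := by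
  obtain ⟨hAE, hne, flat, hyp, chain⟩ := hA
  have hdiff : ⇑h '' (G.edgeSet \ A) = G.edgeSet \ ⇑h '' A := by
    rw [Set.image_diff h.injective, hEimg]
  refine ⟨?_, ?_, ?_, ?_, ?_⟩
  · rw [← hEimg]; exact Set.image_mono hAE
  · rw [← hdiff]; exact hne.image _
  · -- flat
    intro e' he' hsp
    rw [← hdiff] at he'
    obtain ⟨e, he, rfl⟩ := he'
    have hsp' : spanned G (h⁻¹ (h e)) (⇑h⁻¹ '' (⇑h '' A)) := spanned_image hcs' hsp
    rw [perm_inv_image_image, Equiv.Perm.inv_def, Equiv.symm_apply_apply] at hsp'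
    exact flat e he hsp'
  · -- hyperplane
    intro e' he' f' hf'
    rw [← hdiff] at he'
    obtain ⟨e, he, rfl⟩ := he'
    rw [← hEimg] at hf'
    obtain ⟨f, hf, rfl⟩ := hf'
    have := spanned_image hcs (hyp e he f hf)
    rwa [Set.image_insert_eq] at this
  · -- chain
    rintro _ ⟨e, he, rfl⟩ _ ⟨f, hf, rfl⟩
    refine Relation.ReflTransGen.lift _ ?_ _ _ (chain e he f hf)
    rintro a b ⟨C, hC, hCA, haC, hbC⟩
    exact ⟨⇑h '' C, hcs C hC, Set.image_mono hCA, ⟨a, haC, rfl⟩, ⟨b, hbC, rfl⟩⟩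

lemma exists_mcirc {α : Type*} {M : Matroid α} :
    ∀ (n : ℕ) (D : Set α), D.Finite → D.ncard ≤ n → D ⊆ M.E → ¬ M.Indep D →
      ∃ C, C ⊆ D ∧ MCirc M C := by
  intro n
  induction n with
  | zero =>
    intro D hfin hcard hDE hni
    have hD : D = ∅ := (Set.ncard_eq_zero hfin).mp (le_antisymm hcard (Nat.zero_le _))
    exact absurd (hD ▸ M.empty_indep) hni
  | succ n ih =>
    intro D hfin hcard hDE hni
    by_cases hex : ∃ D', D' ⊂ D ∧ ¬ M.Indep D'
    · obtain ⟨D', hsub, hni'⟩ := hex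
      have hlt : D'.ncard < D.ncard := Set.ncard_lt_ncard hsub hfin
      obtain ⟨C, hcsub, hc⟩ := ih D' (hfin.subset hsub.subset) (by omega)
        (hsub.subset.trans hDE) hni'
      exact ⟨C, hcsub.trans hsub.subset, hc⟩
    · push_neg at hex
      exact ⟨D, Set.Subset.rfl, hDE, hni, fun D' hD' => hex D' hD'⟩

lemma indep_iff' [Fintype V] {M : Matroid (Sym2 V)}
    (hE : M.E = G.edgeSet) (hC : ∀ C, MCirc M C ↔ IsCycleSet G C) (I : Set (Sym2 V)) :
    M.Indep I ↔ I ⊆ G.edgeSet ∧ ∀ C, IsCycleSet G C → ¬ C ⊆ I := by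
  classical
  constructor
  · intro h
    refine ⟨hE ▸ h.subset_ground, fun C hCcyc hsub => ?_⟩
    exact ((hC C).mpr hCcyc).2.1 (h.subset hsub)
  · rintro ⟨hIE, hcyc⟩
    by_contra hni
    obtain ⟨C, hsub, hc⟩ := exists_mcirc I.ncard I (Set.toFinite I) le_rfl
      (by rw [hE]; exact hIE) hni
    exact hcyc C ((hC C).mp hc) hsub

lemma mcirc_image {α : Type*} {M : Matroid α} {t : Equiv.Perm α} (ht : IsMAuto M t)
    {C : Set α} (hc : MCirc M C) : MCirc M (⇑t '' C) := by
  have hME : ⇑t '' M.E = M.E := perm_image_of_fix t M.E ht.1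
  refine ⟨?_, ?_, ?_⟩
  · rw [← hME]; exact Set.image_mono hc.1
  · intro h; exact hc.2.1 ((ht.2 C).mp h)
  · intro D hD
    have hD' : ⇑t⁻¹ '' D ⊂ C := by
      constructor
      · intro x hx
        obtain ⟨d, hd, rfl⟩ := hx
        obtain ⟨c, hcC, rfl⟩ := hD.subset hd
        rwa [Equiv.Perm.inv_def, Equiv.symm_apply_apply]
      · intro hsup
        have := Set.image_mono (f := ⇑t) hsup
        rw [perm_image_image_inv] at this
        exact hD.ne (Set.Subset.antisymm hD.subset this)
    have hind := hc.2.2 _ hD'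
    have h2 := (ht.2 (⇑t⁻¹ '' D)).mpr hind
    rwa [perm_image_image_inv] at h2

lemma cycleSet_map {σ : Equiv.Perm V} (hσ : ∀ u v, G.Adj (σ u) (σ v) ↔ G.Adj u v)
    {C : Set (Sym2 V)} (hC : IsCycleSet G C) : IsCycleSet G (Sym2.map ⇑σ '' C) := by
  obtain ⟨r, w, hw, rfl⟩ := hC
  let F : G ≃g G := ⟨σ, hσ _ _⟩
  refine ⟨σ r, w.map F.toHom, hw.map F.toEquiv.injective, ?_⟩
  ext ε
  simp only [Set.mem_setOf_eq, Walk.edges_map, List.mem_map, Set.mem_image]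
  exact ⟨fun ⟨a, h1, h2⟩ => ⟨a, h1, h2⟩, fun ⟨a, h1, h2⟩ => ⟨a, h1, h2⟩⟩

open Classical in
noncomputable def tFun (G : SimpleGraph V) (σ : V → V) (e : Sym2 V) : Sym2 V :=
  if e ∈ G.edgeSet then Sym2.map σ e else e

lemma tFun_pos {f : V → V} {e : Sym2 V} (he : e ∈ G.edgeSet) :
    tFun G f e = Sym2.map f e := if_pos he

lemma tFun_neg {f : V → V} {e : Sym2 V} (he : e ∉ G.edgeSet) : tFun G f e = e := if_neg he

lemma map_mem_iff {σ : Equiv.Perm V} (hσ : ∀ u v, G.Adj (σ u) (σ v) ↔ G.Adj u v)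
    (e : Sym2 V) : Sym2.map ⇑σ e ∈ G.edgeSet ↔ e ∈ G.edgeSet := by
  induction e with
  | _ u v =>
    rw [Sym2.map_pair_eq, mem_edgeSet, mem_edgeSet]
    exact hσ u v

lemma hσ_inv {σ : Equiv.Perm V} (hσ : ∀ u v, G.Adj (σ u) (σ v) ↔ G.Adj u v) :
    ∀ u v, G.Adj (σ⁻¹ u) (σ⁻¹ v) ↔ G.Adj u v := by
  intro u v
  conv_rhs => rw [← σ.apply_symm_apply u, ← σ.apply_symm_apply v]
  rw [← Equiv.Perm.inv_def]
  exact (hσ _ _).symm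

lemma tFun_linv {σ : Equiv.Perm V} (hσ : ∀ u v, G.Adj (σ u) (σ v) ↔ G.Adj u v)
    (e : Sym2 V) : tFun G ⇑σ⁻¹ (tFun G ⇑σ e) = e := by
  by_cases he : e ∈ G.edgeSet
  · rw [tFun_pos he, tFun_pos ((map_mem_iff hσ e).mpr he), Sym2.map_map]
    induction e with
    | _ u v => simp
  · rw [tFun_neg he, tFun_neg he]

lemma tFun_mem_iff {σ : Equiv.Perm V} (hσ : ∀ u v, G.Adj (σ u) (σ v) ↔ G.Adj u v)
    (e : Sym2 V) : tFun G ⇑σ e ∈ G.edgeSet ↔ e ∈ G.edgeSet := by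
  by_cases he : e ∈ G.edgeSet
  · rw [tFun_pos he, map_mem_iff hσ]
  · rw [tFun_neg he]

lemma mem_graphAutGroup_iff {σ : Equiv.Perm V} :
    σ ∈ graphAutGroup G ↔ ∀ u v, G.Adj (σ u) (σ v) ↔ G.Adj u v := Iff.rfl

noncomputable def tPerm (G : SimpleGraph V) (σ : ↥(graphAutGroup G)) : Equiv.Perm (Sym2 V) where
  toFun := tFun G ⇑(σ : Equiv.Perm V)
  invFun := tFun G ⇑((σ : Equiv.Perm V)⁻¹)
  left_inv := tFun_linv ((mem_graphAutGroup_iff (G := G)).mp σ.2)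
  right_inv := by
    intro e
    have h := tFun_linv (hσ_inv ((mem_graphAutGroup_iff (G := G)).mp σ.2)) e
    rwa [inv_inv] at h

lemma tPerm_apply (σ : ↥(graphAutGroup G)) (e : Sym2 V) :
    tPerm G σ e = tFun G ⇑(σ : Equiv.Perm V) e := rfl

lemma tPerm_mul (σ τ : ↥(graphAutGroup G)) : tPerm G (σ * τ) = tPerm G σ * tPerm G τ := by
  apply Equiv.ext
  intro e
  have hτ := (mem_graphAutGroup_iff (G := G)).mp τ.2
  rw [Equiv.Perm.mul_apply, tPerm_apply, tPerm_apply, tPerm_apply]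
  by_cases he : e ∈ G.edgeSet
  · rw [Subgroup.coe_mul, tFun_pos he, tFun_pos he, tFun_pos ((map_mem_iff hτ e).mpr he)]
    induction e with
    | _ u v => simp
  · rw [Subgroup.coe_mul, tFun_neg he, tFun_neg he, tFun_neg he]

noncomputable def tHom (G : SimpleGraph V) : ↥(graphAutGroup G) →* Equiv.Perm (Sym2 V) :=
  MonoidHom.mk' (tPerm G) tPerm_mul

lemma tPerm_isMAuto [Fintype V] {M : Matroid (Sym2 V)} (hE : M.E = G.edgeSet)
    (hC : ∀ C, MCirc M C ↔ IsCycleSet G C) (σ : ↥(graphAutGroup G)) :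
    IsMAuto M (tPerm G σ) := by
  have hσ := (mem_graphAutGroup_iff (G := G)).mp σ.2
  have hσ' := hσ_inv hσ
  constructor
  · intro x hx
    rw [tPerm_apply]
    exact tFun_neg (by rwa [hE] at hx)
  · intro I
    rw [indep_iff' hE hC, indep_iff' hE hC]
    have himg : ∀ (J : Set (Sym2 V)), ⇑(tPerm G σ) '' J ⊆ G.edgeSet ↔ J ⊆ G.edgeSet := by
      intro J
      constructor
      · intro h x hx
        have := h ⟨x, hx, rfl⟩
        rwa [tPerm_apply, tFun_mem_iff hσ] at this
      · rintro h _ ⟨x, hx, rfl⟩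
        rw [tPerm_apply, tFun_mem_iff hσ]
        exact h hx
    constructor
    · rintro ⟨hsub, hcyc⟩
      refine ⟨(himg I).mp hsub, fun C hCcyc hCsub => ?_⟩
      refine hcyc (Sym2.map ⇑(σ : Equiv.Perm V) '' C) (cycleSet_map hσ hCcyc) ?_
      rintro _ ⟨ε, hε, rfl⟩
      refine ⟨ε, hCsub hε, ?_⟩
      rw [tPerm_apply, tFun_pos (cycleSet_subset_edgeSet hCcyc hε)]
    · rintro ⟨hsub, hcyc⟩
      refine ⟨(himg I).mpr hsub, fun C hCcyc hCsub => ?_⟩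
      refine hcyc (Sym2.map ⇑((σ : Equiv.Perm V))⁻¹ '' C) (cycleSet_map hσ' hCcyc) ?_
      rintro _ ⟨x, hxC, rfl⟩
      obtain ⟨y, hyI, hyx⟩ := hCsub hxC
      rw [tPerm_apply] at hyx
      by_cases hy : y ∈ G.edgeSet
      · rw [tFun_pos hy] at hyx
        have : Sym2.map ⇑((σ : Equiv.Perm V))⁻¹ x = y := by
          rw [← hyx, Sym2.map_map]
          induction y with
          | _ u v => simp
        rwa [this]
      · rw [tFun_neg hy] at hyx
        rw [hyx] at hy
        exact absurd (cycleSet_subset_edgeSet hCcyc hxC) hy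

lemma maut_cs {M : Matroid (Sym2 V)} (hC : ∀ C, MCirc M C ↔ IsCycleSet G C)
    {t : Equiv.Perm (Sym2 V)} (ht : IsMAuto M t) :
    ∀ C, IsCycleSet G C → IsCycleSet G (⇑t '' C) := fun C hCc =>
  (hC _).mp (mcirc_image ht ((hC C).mpr hCc))

lemma maut_E {M : Matroid (Sym2 V)} (hE : M.E = G.edgeSet)
    {t : Equiv.Perm (Sym2 V)} (ht : IsMAuto M t) : ⇑t '' G.edgeSet = G.edgeSet := by
  have := perm_image_of_fix t M.E ht.1
  rwa [hE] at this

end WhitneyAux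

open WhitneyAux

/-- If `G` is a 3-connected simple graph, then `Aut(G)` is isomorphic to the
automorphism group of its cycle matroid `M(G)`. -/
theorem stmt14 {V : Type*} [Fintype V] (G : SimpleGraph V)
    (h3 : ThreeConnected G)
    (M : Matroid (Sym2 V)) (hE : M.E = G.edgeSet)
    (hC : ∀ C : Set (Sym2 V), MCirc M C ↔ IsCycleSet G C) :
    Nonempty (graphAutGroup G ≃* matroidAutGroup M) := by
  classical
  obtain ⟨hcard, hdel⟩ := h3
  have hnbr : ∀ w : V, ∃ a b, G.Adj w a ∧ G.Adj w b ∧ a ≠ b := two_neighbors hcard hdel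
  have hmem : ∀ σ : ↥(graphAutGroup G), tHom G σ ∈ matroidAutGroup M := fun σ =>
    tPerm_isMAuto hE hC σ
  set φ : ↥(graphAutGroup G) →* ↥(matroidAutGroup M) :=
    (tHom G).codRestrict (matroidAutGroup M) hmem with hφ
  have hinj : Function.Injective ⇑φ := by
    intro σ τ h
    have h2 : ∀ e, tPerm G σ e = tPerm G τ e := fun e =>
      congrArg (fun ρ => ((ρ : ↥(matroidAutGroup M)) : Equiv.Perm (Sym2 V)) e) h
    apply Subtype.ext; apply Equiv.ext; intro v
    obtain ⟨a, b, hva, hvb, hab⟩ := hnbr v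
    have key : ∀ w, G.Adj v w →
        s((σ : Equiv.Perm V) v, (σ : Equiv.Perm V) w) =
          s((τ : Equiv.Perm V) v, (τ : Equiv.Perm V) w) := by
      intro w hvw
      have h3 := h2 s(v, w)
      rwa [tPerm_apply, tPerm_apply, tFun_pos (G.mem_edgeSet.mpr hvw),
        tFun_pos (G.mem_edgeSet.mpr hvw), Sym2.map_pair_eq, Sym2.map_pair_eq] at h3
    rcases Sym2.eq_iff.mp (key a hva) with ⟨h1, -⟩ | ⟨h1, -⟩
    · exact h1
    · rcases Sym2.eq_iff.mp (key b hvb) with ⟨h2', -⟩ | ⟨h2', -⟩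
      · exact h2'
      · exact absurd ((τ : Equiv.Perm V).injective (h1.symm.trans h2')) hab
  have hsurj : Function.Surjective ⇑φ := by
    intro τ
    set t : Equiv.Perm (Sym2 V) := (τ : Equiv.Perm (Sym2 V)) with hts
    have ht : IsMAuto M t := τ.2
    have ht' : IsMAuto M t⁻¹ := (τ⁻¹ : ↥(matroidAutGroup M)).2
    have hEimg : ⇑t '' G.edgeSet = G.edgeSet := maut_E hE ht
    have hEimg' : ⇑t⁻¹ '' G.edgeSet = G.edgeSet := maut_E hE ht'
    have hcs : ∀ C, IsCycleSet G C → IsCycleSet G (⇑t '' C) := maut_cs hC ht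
    have hcs' : ∀ C, IsCycleSet G C → IsCycleSet G (⇑t⁻¹ '' C) := maut_cs hC ht'
    have hcs'' : ∀ C, IsCycleSet G C → IsCycleSet G (⇑t⁻¹⁻¹ '' C) := by
      rw [inv_inv]; exact hcs
    have hstar : ∀ (s : Equiv.Perm (Sym2 V)),
        (∀ C, IsCycleSet G C → IsCycleSet G (⇑s '' C)) →
        (∀ C, IsCycleSet G C → IsCycleSet G (⇑s⁻¹ '' C)) →
        (⇑s '' G.edgeSet = G.edgeSet) →
        ∀ v : V, ∃ w, ⇑s '' (G.edgeSet \ G.incidenceSet v) =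
          G.edgeSet \ G.incidenceSet w := by
      intro s hs1 hs2 hsE v
      exact isStarComp_eq_starComp
        (isStarComp_image hsE hs1 hs2 (starComp_isStarComp hdel hnbr v))
    choose σf hσf using hstar t hcs hcs' hEimg
    choose σg hσg using hstar t⁻¹ hcs' hcs'' hEimg'
    have huniq : ∀ {w w' : V},
        G.edgeSet \ G.incidenceSet w = G.edgeSet \ G.incidenceSet w' → w = w' := by
      intro w w' hww
      refine starinj hnbr ?_
      rw [← Set.diff_diff_cancel_left (G.incidenceSet_subset w), hww,
        Set.diff_diff_cancel_left (G.incidenceSet_subset w')]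
    have hlinv : ∀ v, σg (σf v) = v := by
      intro v
      refine (huniq ?_).symm
      rw [← hσg (σf v), ← hσf v, perm_inv_image_image]
    have hrinv : ∀ v, σf (σg v) = v := by
      intro v
      refine (huniq ?_).symm
      rw [← hσf (σg v), ← hσg v, perm_image_image_inv]
    have hstarimg : ∀ (s : Equiv.Perm (Sym2 V)) (sf : V → V)
        (hsE : ⇑s '' G.edgeSet = G.edgeSet)
        (hsf : ∀ v, ⇑s '' (G.edgeSet \ G.incidenceSet v) =
          G.edgeSet \ G.incidenceSet (sf v)),
        ∀ v, ⇑s '' G.incidenceSet v = G.incidenceSet (sf v) := by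
      intro s sf hsE hsf v
      have h1 := hsf v
      rw [Set.image_diff s.injective, hsE] at h1
      have h2 : ⇑s '' G.incidenceSet v ⊆ G.edgeSet := by
        rw [← hsE]; exact Set.image_mono (G.incidenceSet_subset v)
      rw [← Set.diff_diff_cancel_left h2,
        ← Set.diff_diff_cancel_left (G.incidenceSet_subset (sf v)), h1]
    have hedge : ∀ (s : Equiv.Perm (Sym2 V)) (sf : V → V),
        (∀ v, ⇑s '' G.incidenceSet v = G.incidenceSet (sf v)) →
        Function.Injective sf →
        ∀ u v, G.Adj u v → s s(u, v) = s(sf u, sf v) ∧ G.Adj (sf u) (sf v) := by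
      intro s sf hsimg hsfinj u v huv
      have h1 : s s(u, v) ∈ G.incidenceSet (sf u) := by
        rw [← hsimg u]
        exact ⟨s(u, v), ⟨G.mem_edgeSet.mpr huv, Sym2.mem_mk_left _ _⟩, rfl⟩
      have h2 : s s(u, v) ∈ G.incidenceSet (sf v) := by
        rw [← hsimg v]
        exact ⟨s(u, v), ⟨G.mem_edgeSet.mpr huv, Sym2.mem_mk_right _ _⟩, rfl⟩
      have hne : sf u ≠ sf v := fun hh => huv.ne (hsfinj hh)
      have heq : s s(u, v) = s(sf u, sf v) := sym2_two hne h1.2 h2.2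
      exact ⟨heq, G.mem_edgeSet.mp (heq ▸ h1.1)⟩
    have hfinj : Function.Injective σf :=
      Function.LeftInverse.injective hlinv
    have hginj : Function.Injective σg :=
      Function.LeftInverse.injective hrinv
    have hedgef := hedge t σf (hstarimg t σf hEimg hσf) hfinj
    have hedgeg := hedge t⁻¹ σg (hstarimg t⁻¹ σg hEimg' hσg) hginj
    set σE : Equiv.Perm V := ⟨σf, σg, hlinv, hrinv⟩ with hσE
    have hmemg : σE ∈ graphAutGroup G := by
      intro u v
      constructor
      · intro hadj
        have h4 := (hedgeg _ _ hadj).2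
        show G.Adj u v
        rw [← hlinv u, ← hlinv v]
        exact h4
      · intro hadj
        exact (hedgef u v hadj).2
    refine ⟨⟨σE, hmemg⟩, ?_⟩
    apply Subtype.ext
    apply Equiv.ext
    intro e
    show tPerm G ⟨σE, hmemg⟩ e = t e
    rw [tPerm_apply]
    by_cases he : e ∈ G.edgeSet
    · obtain ⟨u, v, rfl, huv⟩ := edge_rep he
      rw [tFun_pos he, Sym2.map_pair_eq]
      exact ((hedgef u v huv).1).symm
    · rw [tFun_neg he]
      exact (ht.1 e (by rwa [hE])).symm
  exact ⟨MulEquiv.ofBijective φ ⟨hinj, hsurj⟩⟩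
end
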